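/- arXiv:1808.09444 — 10 statements merged into one kernel-verified Lean document; each statement's English description precedes it below -/
import Mathlib

section
/- Let P be an n×n row substochastic matrix (all entries nonnegative and each row sum at most 1) whose spectral radius is strictly less than one, and let C = (I − Pᵀ)⁻¹. Then each diagonal entry of C is a maximal element of its row: for all indices m and l, C_{m,l} ≤ C_{m,m}. -/
open Matrix Filter Finset Topology

attribute [local instance] Matrix.linftyOpNormedRing Matrix.linftyOpNormedAlgebra

private lemma pow_entry_nonneg' {n : ℕ} (P : Matrix (Fin n) (Fin n) ℝ)
    (hnonneg : ∀ i j, 0 ≤ P i j) : ∀ k i j, 0 ≤ (P ^ k) i j := by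
  intro k
  induction k with
  | zero => intro i j; by_cases h : i = j <;> simp [h, Matrix.one_apply]
  | succ k ih =>
    intro i j
    rw [pow_succ, Matrix.mul_apply]
    exact Finset.sum_nonneg fun c _ => mul_nonneg (ih i c) (hnonneg c j)

private lemma partial_sum_le' {n : ℕ} (P : Matrix (Fin n) (Fin n) ℝ)
    (hnonneg : ∀ i j, 0 ≤ P i j) (hrowsum : ∀ i, ∑ j, P i j ≤ 1) (m : Fin n) :
    ∀ N j, ∑ k ∈ Finset.range N, (P ^ k) j m ≤ ∑ k ∈ Finset.range N, (P ^ k) m m := by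
  intro N
  induction N with
  | zero => simp
  | succ N ih =>
    intro j
    have hmN : (0:ℝ) ≤ ∑ k ∈ Finset.range N, (P ^ k) m m :=
      Finset.sum_nonneg fun k _ => pow_entry_nonneg' P hnonneg k m m
    have hmono : ∑ k ∈ Finset.range N, (P ^ k) m m
        ≤ ∑ k ∈ Finset.range (N+1), (P ^ k) m m := by
      rw [Finset.sum_range_succ]
      have := pow_entry_nonneg' P hnonneg N m m
      linarith
    by_cases hj : j = m
    · subst hj; exact le_rfl
    · have h1 : ∑ k ∈ Finset.range (N+1), (P ^ k) j m
          = ∑ i, P j i * ∑ k ∈ Finset.range N, (P ^ k) i m := by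
        rw [Finset.sum_range_succ']
        have h0 : (P ^ 0) j m = 0 := by simp [Matrix.one_apply, hj]
        rw [h0, add_zero]
        simp_rw [pow_succ', Matrix.mul_apply, Finset.mul_sum]
        exact Finset.sum_comm
      calc ∑ k ∈ Finset.range (N+1), (P ^ k) j m
          = ∑ i, P j i * ∑ k ∈ Finset.range N, (P ^ k) i m := h1
        _ ≤ ∑ i, P j i * ∑ k ∈ Finset.range N, (P ^ k) m m :=
            Finset.sum_le_sum fun i _ =>
              mul_le_mul_of_nonneg_left (ih i) (hnonneg j i)
        _ = (∑ i, P j i) * ∑ k ∈ Finset.range N, (P ^ k) m m := by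
            rw [Finset.sum_mul]
        _ ≤ 1 * ∑ k ∈ Finset.range N, (P ^ k) m m :=
            mul_le_mul_of_nonneg_right (hrowsum j) hmN
        _ = ∑ k ∈ Finset.range N, (P ^ k) m m := one_mul _
        _ ≤ ∑ k ∈ Finset.range (N+1), (P ^ k) m m := hmono

/-- If `P` is a row substochastic `n × n` matrix (nonnegative entries,
row sums at most `1`) with spectral radius strictly less than one, then every diagonal
entry of `C = (I - Pᵀ)⁻¹` is a maximal element of its row. -/
theorem diagonal_entries_maximal
    {n : ℕ} (P : Matrix (Fin n) (Fin n) ℝ)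
    (hnonneg : ∀ i j, 0 ≤ P i j)
    (hrowsum : ∀ i, ∑ j, P i j ≤ 1)
    (hspec : ∀ μ ∈ spectrum ℂ (P.map (fun x => (x : ℂ))), ‖μ‖ < 1)
    (m l : Fin n) :
    (1 - Pᵀ)⁻¹ m l ≤ (1 - Pᵀ)⁻¹ m m := by
  haveI : NeZero n := ⟨m.pos.ne'⟩
  set A : Matrix (Fin n) (Fin n) ℂ := P.map (fun x => (x : ℂ)) with hA
  have hmapA : A = Complex.ofRealHom.mapMatrix P := rfl
  haveI : CompleteSpace (Matrix (Fin n) (Fin n) ℂ) := FiniteDimensional.complete ℂ _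
  -- spectral radius < 1
  have hsr : spectralRadius ℂ A < 1 := by
    have := spectrum.spectralRadius_lt_of_forall_lt A (r := 1)
      (fun z hz => by simpa [← NNReal.coe_lt_coe, coe_nnnorm] using hspec z hz)
    simpa using this
  -- powers tend to zero entrywise
  have hpow0 : ∀ i j : Fin n, Tendsto (fun N => (P ^ N) i j) atTop (𝓝 0) := by
    intro i j
    obtain ⟨r, hr1, hr2⟩ := exists_between hsr
    have hrne : r ≠ ⊤ := (hr2.trans_le le_top).ne
    set s : NNReal := r.toNNReal with hs
    have hrs : r = (s : ENNReal) := (ENNReal.coe_toNNReal hrne).symm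
    have hs1 : (s : ℝ) < 1 := by
      have := hr2
      rw [hrs] at this
      exact_mod_cast this
    have hG := spectrum.pow_nnnorm_pow_one_div_tendsto_nhds_spectralRadius A
    have hev : ∀ᶠ k : ℕ in atTop, (‖A ^ k‖₊ : ENNReal) ^ (1 / (k:ℝ)) < r :=
      hG.eventually_lt_const hr1
    have hbound : ∀ᶠ k : ℕ in atTop, ‖(P ^ k) i j‖ ≤ (s : ℝ) ^ k := by
      filter_upwards [hev, eventually_ge_atTop 1] with k hk hk1
      have hk0' : (k : ℝ) ≠ 0 := by positivity
      have h1 : (‖A ^ k‖₊ : ENNReal) ≤ r ^ k := by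
        have h2 : ((‖A ^ k‖₊ : ENNReal) ^ (1 / (k:ℝ))) ^ k ≤ r ^ k :=
          pow_le_pow_left' hk.le k
        rwa [← ENNReal.rpow_natCast ((‖A ^ k‖₊ : ENNReal) ^ (1 / (k:ℝ))) k,
          ← ENNReal.rpow_mul, one_div, inv_mul_cancel₀ hk0', ENNReal.rpow_one] at h2
      rw [hrs, ← ENNReal.coe_pow, ENNReal.coe_le_coe] at h1
      have hentry : ‖(A ^ k) i j‖₊ ≤ ‖A ^ k‖₊ := by
        rw [Matrix.linfty_opNNNorm_def]
        exact le_trans (Finset.single_le_sum (f := fun j' => ‖(A ^ k) i j'‖₊)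
          (fun _ _ => zero_le) (Finset.mem_univ j))
          (Finset.le_sup (f := fun i => ∑ j', ‖(A ^ k) i j'‖₊) (Finset.mem_univ i))
      have hAk : (A ^ k) i j = ((P ^ k) i j : ℂ) := by
        rw [hmapA, ← map_pow, RingHom.mapMatrix_apply]
        rfl
      have : ‖(P ^ k) i j‖ ≤ (‖A ^ k‖₊ : ℝ) := by
        have := hentry
        rw [hAk] at this
        calc ‖(P ^ k) i j‖ = (‖((P ^ k) i j : ℂ)‖₊ : ℝ) := by
              rw [coe_nnnorm]; simp
          _ ≤ (‖A ^ k‖₊ : ℝ) := by exact_mod_cast this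
      exact this.trans (by exact_mod_cast h1)
    have hsge : (0:ℝ) ≤ (s:ℝ) := s.coe_nonneg
    exact squeeze_zero_norm' hbound
      (tendsto_pow_atTop_nhds_zero_of_lt_one hsge hs1)
  -- invertibility
  have hdet : (1 - Pᵀ).det ≠ 0 := by
    intro h0
    have h1 : ((1 : Matrix (Fin n) (Fin n) ℝ) - P).det = 0 := by
      rw [← Matrix.det_transpose]
      simpa [Matrix.transpose_sub, Matrix.transpose_one] using h0
    have h2 : ((1 : Matrix (Fin n) (Fin n) ℂ) - A).det = 0 := by
      have h2' := Complex.ofRealHom.map_det ((1 : Matrix (Fin n) (Fin n) ℝ) - P)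
      rw [h1, map_zero] at h2'
      have hmap : (1 : Matrix (Fin n) (Fin n) ℂ) - A
          = ((1 : Matrix (Fin n) (Fin n) ℝ) - P).map Complex.ofRealHom := by
        rw [hmapA, ← RingHom.mapMatrix_apply, map_sub, _root_.map_one]
      rw [RingHom.mapMatrix_apply] at h2'
      rw [hmap, ← h2']
    have h3 : ¬ IsUnit ((1 : Matrix (Fin n) (Fin n) ℂ) - A) := by
      rw [Matrix.isUnit_iff_isUnit_det, h2]
      exact not_isUnit_zero
    have h4 : (1:ℂ) ∈ spectrum ℂ A := by
      rw [spectrum.mem_iff]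
      simpa using h3
    have := hspec 1 h4
    simp at this
  have hUnit : IsUnit (1 - Pᵀ).det := isUnit_iff_ne_zero.mpr hdet
  have hCr : (1 - Pᵀ) * (1 - Pᵀ)⁻¹ = 1 := Matrix.mul_nonsing_inv _ hUnit
  set C := (1 - Pᵀ)⁻¹ with hC
  -- geometric partial sums
  have hS : ∀ N : ℕ, (∑ k ∈ Finset.range N, Pᵀ ^ k) = (1 - Pᵀ ^ N) * C := by
    intro N
    have h := geom_sum_mul Pᵀ N
    have h2 : (∑ k ∈ Finset.range N, Pᵀ ^ k) * (1 - Pᵀ) = 1 - Pᵀ ^ N := by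
      have := congrArg Neg.neg h
      rw [← mul_neg, neg_sub, neg_sub] at this
      exact this
    calc (∑ k ∈ Finset.range N, Pᵀ ^ k)
        = (∑ k ∈ Finset.range N, Pᵀ ^ k) * ((1 - Pᵀ) * C) := by rw [hCr, mul_one]
      _ = ((∑ k ∈ Finset.range N, Pᵀ ^ k) * (1 - Pᵀ)) * C := by rw [mul_assoc]
      _ = (1 - Pᵀ ^ N) * C := by rw [h2]
  -- entrywise convergence
  have hconv : ∀ l' : Fin n,
      Tendsto (fun N => ∑ k ∈ Finset.range N, (P ^ k) l' m) atTop (𝓝 (C m l')) := by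
    intro l'
    have hEq : ∀ N : ℕ, ∑ k ∈ Finset.range N, (P ^ k) l' m
        = C m l' - ∑ j, (P ^ N) j m * C j l' := by
      intro N
      have h := congrFun (congrFun (hS N) m) l'
      have hL : (∑ k ∈ Finset.range N, Pᵀ ^ k) m l'
          = ∑ k ∈ Finset.range N, (P ^ k) l' m := by
        rw [Matrix.sum_apply]
        refine Finset.sum_congr rfl fun k _ => ?_
        rw [← Matrix.transpose_pow]
        rfl
      have hR : ((1 - Pᵀ ^ N) * C) m l' = C m l' - ∑ j, (P ^ N) j m * C j l' := by
        rw [Matrix.sub_mul, Matrix.one_mul, Matrix.sub_apply, Matrix.mul_apply]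
        congr 1
        refine Finset.sum_congr rfl fun j _ => ?_
        rw [← Matrix.transpose_pow]
        rfl
      rw [← hL, ← hR]
      exact h
    have h0 : Tendsto (fun N => ∑ j, (P ^ N) j m * C j l') atTop (𝓝 0) := by
      have : Tendsto (fun N => ∑ j, (P ^ N) j m * C j l') atTop
          (𝓝 (∑ j : Fin n, 0 * C j l')) := by
        exact tendsto_finset_sum _ fun j _ => (hpow0 j m).mul_const _
      simpa using this
    have := (tendsto_const_nhds (x := C m l')).sub h0
    rw [sub_zero] at this
    have hfun : (fun N => ∑ k ∈ Finset.range N, (P ^ k) l' m)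
        = fun N => C m l' - ∑ j, (P ^ N) j m * C j l' := funext hEq
    rw [hfun]
    exact this
  exact le_of_tendsto_of_tendsto' (hconv l) (hconv m)
    (fun N => partial_sum_le' P hnonneg hrowsum m N l)
end

section
/- Let P be an n×n row substochastic matrix (all entries nonnegative and each row sum at most 1) whose spectral radius is strictly less than one. Then det(I − Pᵀ) > 0. -/
open Matrix

/-- If `P` is a row substochastic `n × n` matrix (nonnegative entries,
row sums at most `1`) with spectral radius strictly less than one, then
`det (I - Pᵀ) > 0`. -/
theorem det_one_sub_transpose_pos
    {n : ℕ} (P : Matrix (Fin n) (Fin n) ℝ)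
    (hnonneg : ∀ i j, 0 ≤ P i j)
    (hrowsum : ∀ i, ∑ j, P i j ≤ 1)
    (hspec : ∀ μ ∈ spectrum ℂ (P.map (fun x => (x : ℂ))), ‖μ‖ < 1) :
    0 < (1 - Pᵀ).det := by
  have hdt : (1 - Pᵀ).det = (1 - P).det := by
    rw [show (1 : Matrix (Fin n) (Fin n) ℝ) - Pᵀ = (1 - P)ᵀ by
      rw [Matrix.transpose_sub, Matrix.transpose_one], Matrix.det_transpose]
  rw [hdt]
  set A : Matrix (Fin n) (Fin n) ℂ := P.map (fun x => (x : ℂ)) with hA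
  set f : ℝ → ℝ := fun t => (1 - t • P).det with hf
  -- f never vanishes on [0,1]
  have hne : ∀ t ∈ Set.Icc (0:ℝ) 1, f t ≠ 0 := by
    intro t ht h0
    rcases eq_or_lt_of_le ht.1 with h | hpos
    · simp [hf, ← h] at h0
    · -- over ℂ, det (1 - t • A) = 0
      have hmapdet : (RingHom.mapMatrix (algebraMap ℝ ℂ))
          ((1 : Matrix (Fin n) (Fin n) ℝ) - t • P) = 1 - (t : ℂ) • A := by
        ext i j
        simp [Matrix.map_apply, Matrix.one_apply, hA, Matrix.sub_apply,
          Matrix.smul_apply]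
        split <;> simp
      have hC : ((1 : Matrix (Fin n) (Fin n) ℂ) - (t : ℂ) • A).det = 0 := by
        have := congrArg (algebraMap ℝ ℂ) h0
        rw [hf] at this
        rwa [RingHom.map_det, hmapdet, map_zero] at this
      have htC : (t : ℂ) ≠ 0 := by exact_mod_cast hpos.ne'
      have hfac : (1 : Matrix (Fin n) (Fin n) ℂ) - (t : ℂ) • A
          = (t : ℂ) • ((algebraMap ℂ (Matrix (Fin n) (Fin n) ℂ)) ((t : ℂ)⁻¹) - A) := by
        rw [Algebra.algebraMap_eq_smul_one, smul_sub, smul_smul,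
          mul_inv_cancel₀ htC, one_smul]
      have hdet2 : ((algebraMap ℂ (Matrix (Fin n) (Fin n) ℂ)) ((t : ℂ)⁻¹) - A).det = 0 := by
        rw [hfac, Matrix.det_smul] at hC
        rcases mul_eq_zero.mp hC with h | h
        · exact absurd h (pow_ne_zero _ htC)
        · exact h
      have hmem : (t : ℂ)⁻¹ ∈ spectrum ℂ A := by
        rw [spectrum.mem_iff]
        intro hU
        rw [Matrix.isUnit_iff_isUnit_det, hdet2] at hU
        exact hU.ne_zero rfl
      have := hspec _ hmem
      rw [norm_inv] at this
      have h1 : (1:ℝ) ≤ ‖(t : ℂ)‖⁻¹ := by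
        rw [Complex.norm_real, Real.norm_of_nonneg ht.1]
        exact (one_le_inv₀ hpos).mpr ht.2
      linarith
  -- f is continuous
  have hcont : Continuous f := by
    apply Continuous.matrix_det
    exact continuous_const.sub (continuous_id.smul continuous_const)
  have hf0 : f 0 = 1 := by simp [hf]
  -- IVT
  by_contra hle
  push_neg at hle
  have h1 : f 1 ≤ 0 := by simpa [hf] using hle
  have : (0:ℝ) ∈ Set.Icc (f 1) (f 0) := ⟨h1, by rw [hf0]; norm_num⟩
  obtain ⟨t, ht, hft⟩ := intermediate_value_Icc' (by norm_num : (0:ℝ) ≤ 1)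
    hcont.continuousOn this
  exact hne t ht hft
end

section
/- Let Q be an n×n column substochastic matrix (all entries nonnegative and each column sum at most 1). Then det(I − Q) ≥ 0. -/
open Matrix

/-- For `0 ≤ t < 1`, the matrix `1 - t • Q` is strictly column diagonally dominant,
hence its determinant is nonzero. -/
lemma aux_det_ne_zero {n : ℕ} (Q : Matrix (Fin n) (Fin n) ℝ)
    (hnonneg : ∀ i j, 0 ≤ Q i j)
    (hcolsum : ∀ j, ∑ i, Q i j ≤ 1)
    {t : ℝ} (ht0 : 0 ≤ t) (ht1 : t < 1) :
    ((1 : Matrix (Fin n) (Fin n) ℝ) - t • Q).det ≠ 0 := by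
  apply det_ne_zero_of_sum_col_lt_diag
  intro k
  have hkk : Q k k ≤ ∑ i, Q i k :=
    Finset.single_le_sum (fun i _ => hnonneg i k) (Finset.mem_univ k)
  have hsum_nonneg : (0:ℝ) ≤ ∑ i, Q i k :=
    Finset.sum_nonneg (fun i _ => hnonneg i k)
  have h1 : ∀ i ∈ Finset.univ.erase k,
      ‖((1 : Matrix (Fin n) (Fin n) ℝ) - t • Q) i k‖ = t * Q i k := by
    intro i hi
    have hik : i ≠ k := (Finset.mem_erase.mp hi).1
    simp only [Matrix.sub_apply, Matrix.smul_apply, Matrix.one_apply_ne hik, smul_eq_mul,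
      zero_sub, norm_neg, Real.norm_eq_abs]
    exact abs_of_nonneg (mul_nonneg ht0 (hnonneg i k))
  rw [Finset.sum_congr rfl h1]
  have hdiag : ((1 : Matrix (Fin n) (Fin n) ℝ) - t • Q) k k = 1 - t * Q k k := by
    simp [Matrix.sub_apply]
  rw [hdiag]
  have htQ : t * Q k k ≤ 1 := by
    calc t * Q k k ≤ 1 * 1 := by
          apply mul_le_mul ht1.le (hkk.trans (hcolsum k)) (hnonneg k k) zero_le_one
      _ = 1 := one_mul 1
  rw [Real.norm_eq_abs, abs_of_nonneg (by linarith : (0:ℝ) ≤ 1 - t * Q k k)]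
  have : ∑ i ∈ Finset.univ.erase k, t * Q i k
      = t * (∑ i, Q i k) - t * Q k k := by
    rw [← Finset.mul_sum, Finset.sum_erase_eq_sub (Finset.mem_univ k), mul_sub]
  rw [this]
  have : t * (∑ i, Q i k) < 1 := by
    calc t * (∑ i, Q i k) ≤ t * 1 := by
          exact mul_le_mul_of_nonneg_left (hcolsum k) ht0
      _ = t := mul_one t
      _ < 1 := ht1
  linarith

/-- If `Q` is a column substochastic `n × n` matrix (nonnegative entries,
column sums at most `1`), then `det (I - Q) ≥ 0`. -/
theorem det_one_sub_nonneg_of_column_substochastic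
    {n : ℕ} (Q : Matrix (Fin n) (Fin n) ℝ)
    (hnonneg : ∀ i j, 0 ≤ Q i j)
    (hcolsum : ∀ j, ∑ i, Q i j ≤ 1) :
    0 ≤ (1 - Q).det := by
  by_contra h
  push_neg at h
  set f : ℝ → ℝ := fun t => ((1 : Matrix (Fin n) (Fin n) ℝ) - t • Q).det with hf
  have hcont : Continuous f := by
    apply Continuous.matrix_det
    fun_prop
  have hf0 : f 0 = 1 := by simp [hf]
  have hf1 : f 1 = (1 - Q).det := by simp [hf]
  have h01 : (0:ℝ) ≤ 1 := zero_le_one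
  have hIVT := intermediate_value_Icc' h01 hcont.continuousOn
  have hmem : (0:ℝ) ∈ Set.Icc (f 1) (f 0) := by
    constructor
    · rw [hf1]; exact h.le
    · rw [hf0]; exact zero_le_one
  obtain ⟨t, ht, hft⟩ := hIVT hmem
  rcases lt_or_eq_of_le ht.2 with h1 | h1
  · exact aux_det_ne_zero Q hnonneg hcolsum ht.1 h1 hft
  · rw [h1] at hft
    rw [hf1] at hft
    linarith
end

section
/- Let P = (p_{lm}) be an n×n row substochastic matrix (all entries nonnegative and each row sum at most 1) with spectral radius strictly less than one. Then for every index m: p_{m·}((I−P)(m|m))⁻¹ p_{·m} / (1 − p_{mm} − p_{m·}((I−P)(m|m))⁻¹ p_{·m}) = Σ_{k≠m} p_{km} f_{mk}((I−P)(k|k))⁻¹ p_{·k} / (1 − p_{kk} − p_{k·}((I−P)(k|k))⁻¹ p_{·k}). -/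
open Matrix

/-- The `l`-th column of `B` with its `l`-th entry deleted (a vector in `ℝⁿ`). -/
def delCol {n : ℕ} (B : Matrix (Fin (n + 1)) (Fin (n + 1)) ℝ) (l : Fin (n + 1)) :
    Fin n → ℝ :=
  fun i => B (l.succAbove i) l

/-- The `l`-th row of `B` with its `l`-th entry deleted (a row vector in `ℝⁿ`). -/
def delRow {n : ℕ} (B : Matrix (Fin (n + 1)) (Fin (n + 1)) ℝ) (l : Fin (n + 1)) :
    Fin n → ℝ :=
  fun j => B l (l.succAbove j)

/-- `B(i|j)`: the matrix obtained from `B` by deleting row `i` and column `j`. -/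
def delMat {n : ℕ} (B : Matrix (Fin (n + 1)) (Fin (n + 1)) ℝ) (i j : Fin (n + 1)) :
    Matrix (Fin n) (Fin n) ℝ :=
  B.submatrix i.succAbove j.succAbove

/-- `f m l` (for `m ≠ l`): the standard basis row vector of `ℝⁿ` selecting the
coordinate corresponding to the original index `m` after index `l` has been deleted;
it equals `eₘ` if `m < l` and `e_{m-1}` if `m > l`. -/
def fSel {n : ℕ} (m l : Fin (n + 1)) : Fin n → ℝ :=
  fun j => if l.succAbove j = m then 1 else 0

lemma det_one_sub_eq_zero_of_dominates {N : ℕ} (P : Matrix (Fin (N + 1)) (Fin (N + 1)) ℝ)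
    (hnonneg : ∀ i j, 0 ≤ P i j) (hrowsum : ∀ i, ∑ j, P i j ≤ 1)
    (w : Fin (N + 1) → ℝ) (hw0 : ∀ i, 0 ≤ w i) (hwne : w ≠ 0)
    (hdom : ∀ i, w i ≤ (P *ᵥ w) i) : (1 - P).det = 0 := by
  classical
  obtain ⟨i₀, hi₀⟩ := Finite.exists_max w
  set c := w i₀ with hc
  have hcpos : 0 < c := by
    by_contra h
    push_neg at h
    apply hwne
    funext j
    have := hi₀ j
    have := hw0 j
    simp only [Pi.zero_apply]
    linarith
  set p : Fin (N + 1) → Prop := fun i => w i = c with hp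
  -- key facts on rows in T = {i | w i = c}
  have key : ∀ i, p i → (∀ j, ¬ p j → P i j = 0) ∧ (∑ j, P i j = 1) := by
    intro i hpi
    have h1 : ∑ j, P i j * w j ≤ ∑ j, P i j * c := by
      apply Finset.sum_le_sum
      intro j _
      exact mul_le_mul_of_nonneg_left (hi₀ j) (hnonneg i j)
    have h2 : ∑ j, P i j * c ≤ c := by
      rw [← Finset.sum_mul]
      calc (∑ j, P i j) * c ≤ 1 * c := by
            exact mul_le_mul_of_nonneg_right (hrowsum i) (le_of_lt hcpos)
        _ = c := one_mul c
    have h0 : c ≤ ∑ j, P i j * w j := by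
      have := hdom i
      rw [hpi] at this
      simpa [Matrix.mulVec, dotProduct] using this
    have heq1 : ∑ j, P i j * w j = c := le_antisymm (le_trans h1 h2) h0
    have heq2 : ∑ j, P i j * c = c := le_antisymm h2 (heq1 ▸ h1)
    have hsum1 : ∑ j, P i j = 1 := by
      have : (∑ j, P i j) * c = 1 * c := by
        rw [← Finset.sum_mul] at heq2; rw [heq2, one_mul]
      exact mul_right_cancel₀ (ne_of_gt hcpos) this
    refine ⟨?_, hsum1⟩
    intro j hpj
    have hzero : ∑ j, P i j * (c - w j) = 0 := by
      simp [mul_sub, Finset.sum_sub_distrib, heq1, heq2]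
    have hterm : ∀ j ∈ Finset.univ, 0 ≤ P i j * (c - w j) := by
      intro j _
      exact mul_nonneg (hnonneg i j) (by linarith [hi₀ j])
    have := (Finset.sum_eq_zero_iff_of_nonneg hterm).mp hzero j (Finset.mem_univ j)
    rcases mul_eq_zero.mp this with h | h
    · exact h
    · exfalso; apply hpj; simp only [hp]; linarith
  haveI : DecidablePred p := Classical.decPred p
  set NN := (1 - P).submatrix (Equiv.sumCompl p) (Equiv.sumCompl p) with hNN
  have hdet : NN.det = (1 - P).det := Matrix.det_submatrix_equiv_self (Equiv.sumCompl p) _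
  rw [← hdet]
  rw [← Matrix.fromBlocks_toBlocks NN]
  have h12 : NN.toBlocks₁₂ = 0 := by
    ext i j
    simp only [Matrix.toBlocks₁₂, Matrix.of_apply, hNN, Matrix.submatrix_apply,
      Matrix.sub_apply, Matrix.one_apply, Matrix.zero_apply]
    simp only [Equiv.sumCompl_apply_inl, Equiv.sumCompl_apply_inr]
    have hij : (i : Fin (N + 1)) ≠ (j : Fin (N + 1)) := by
      intro h
      exact j.2 (h ▸ i.2)
    simp only [hij, if_false, (key _ i.2).1 _ j.2]
    ring
  rw [h12, Matrix.det_fromBlocks_zero₁₂]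
  have : (NN.toBlocks₁₁).det = 0 := by
    rw [← Matrix.exists_mulVec_eq_zero_iff]
    refine ⟨fun _ => 1, ?_, ?_⟩
    · intro h
      have := congrFun h ⟨i₀, rfl⟩
      norm_num at this
    · funext i
      simp only [Matrix.mulVec, dotProduct, mul_one, Pi.zero_apply]
      simp only [Matrix.toBlocks₁₁, Matrix.of_apply, hNN, Matrix.submatrix_apply,
        Matrix.sub_apply, Matrix.one_apply, Equiv.sumCompl_apply_inl]
      rw [Finset.sum_sub_distrib]
      have hsub : ∑ j : {x // p x}, P ((i : Fin (N+1))) (j : Fin (N+1)) = 1 := by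
        have hsplit := Finset.sum_filter_add_sum_filter_not Finset.univ p
          (fun j => P (i : Fin (N+1)) j)
        have hz : ∑ j ∈ Finset.univ.filter (fun j => ¬ p j),
            P (i : Fin (N+1)) j = 0 := by
          apply Finset.sum_eq_zero
          intro j hj
          exact (key _ i.2).1 j (Finset.mem_filter.mp hj).2
        have hfull : ∑ j, P (i : Fin (N+1)) j = 1 := (key _ i.2).2
        have h1 : ∑ j ∈ Finset.univ.filter p, P (i : Fin (N+1)) j = 1 := by
          rw [← hfull, ← hsplit, hz, add_zero]
        rw [← h1]
        exact (Finset.sum_subtype _ (by simp) _).symm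
      rw [hsub]
      have hone : ∑ j : {x // p x},
          (if (i : Fin (N+1)) = (j : Fin (N+1)) then (1:ℝ) else 0) = 1 := by
        rw [Finset.sum_eq_single i]
        · simp
        · intro j _ hji
          rw [if_neg]
          intro h
          exact hji (Subtype.ext h.symm)
        · simp
      rw [hone]; ring
  rw [this, zero_mul]

lemma det_one_sub_ne_zero_of_spec {N : ℕ} (P : Matrix (Fin (N + 1)) (Fin (N + 1)) ℝ)
    (hspec : ∀ μ ∈ spectrum ℂ (P.map (fun x => (x : ℂ))), ‖μ‖ < 1) :
    (1 - P).det ≠ 0 := by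
  intro h
  have h1 : (1 : ℂ) ∈ spectrum ℂ (P.map (fun x => (x : ℂ))) := by
    rw [spectrum.mem_iff]
    intro hu
    rw [Matrix.isUnit_iff_isUnit_det] at hu
    have : (algebraMap ℂ (Matrix (Fin (N+1)) (Fin (N+1)) ℂ) 1
        - P.map (fun x => (x : ℂ))) = (1 - P).map (algebraMap ℝ ℂ) := by
      rw [_root_.map_one]
      ext i j
      simp [Matrix.sub_apply, Matrix.one_apply]
      split <;> simp
    rw [this] at hu
    rw [show ((1 - P).map (algebraMap ℝ ℂ)).det = algebraMap ℝ ℂ (1-P).det from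
      ((algebraMap ℝ ℂ).map_det (1-P)).symm] at hu
    rw [h] at hu
    simp at hu
  have := hspec 1 h1
  norm_num at this

lemma det_delMat_ne_zero {N : ℕ} (P : Matrix (Fin (N + 1)) (Fin (N + 1)) ℝ)
    (hnonneg : ∀ i j, 0 ≤ P i j) (hrowsum : ∀ i, ∑ j, P i j ≤ 1)
    (hdet : (1 - P).det ≠ 0) (k : Fin (N + 1)) :
    (delMat (1 - P) k k).det ≠ 0 := by
  classical
  intro h
  set S := P.submatrix k.succAbove k.succAbove with hS
  have hdel : delMat (1 - P) k k = 1 - S := by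
    ext i j
    simp [delMat, Matrix.sub_apply, Matrix.submatrix_apply, Matrix.one_apply,
      (Fin.succAbove_right_injective (p := k)).eq_iff]
    rfl
  rw [hdel, ← Matrix.exists_mulVec_eq_zero_iff] at h
  obtain ⟨v, hvne, hv⟩ := h
  have hfix : S *ᵥ v = v := by
    have : (1 : Matrix (Fin N) (Fin N) ℝ) *ᵥ v - S *ᵥ v = 0 := by
      rw [← Matrix.sub_mulVec]; exact hv
    rw [Matrix.one_mulVec] at this
    funext j
    have := congrFun this j
    simp only [Pi.sub_apply, Pi.zero_apply] at this
    linarith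
  set w : Fin (N + 1) → ℝ := fun j => ∑ i, if k.succAbove i = j then |v i| else 0 with hw
  have hwsucc : ∀ i, w (k.succAbove i) = |v i| := by
    intro i
    rw [hw]
    simp only []
    rw [Finset.sum_eq_single i]
    · simp
    · intro j _ hji
      rw [if_neg]
      exact fun hcon => hji (Fin.succAbove_right_injective hcon)
    · simp
  have hwk : w k = 0 := by
    rw [hw]
    apply Finset.sum_eq_zero
    intro i _
    rw [if_neg (Fin.succAbove_ne k i)]
  have hw0 : ∀ j, 0 ≤ w j := by
    intro j
    apply Finset.sum_nonneg
    intro i _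
    split <;> simp [abs_nonneg]
  have hwne : w ≠ 0 := by
    intro hcon
    apply hvne
    funext i
    have := congrFun hcon (k.succAbove i)
    rw [hwsucc i] at this
    simpa using this
  have hdom : ∀ j, w j ≤ (P *ᵥ w) j := by
    intro j
    have hnn : 0 ≤ (P *ᵥ w) j := by
      simp only [Matrix.mulVec, dotProduct]
      apply Finset.sum_nonneg
      intro l _
      exact mul_nonneg (hnonneg j l) (hw0 l)
    rcases eq_or_ne j k with rfl | hjk
    · rw [hwk]; exact hnn
    · obtain ⟨i, rfl⟩ := Fin.exists_succAbove_eq hjk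
      rw [hwsucc i]
      have h1 : |v i| = |(S *ᵥ v) i| := by rw [hfix]
      have h2 : |(S *ᵥ v) i| ≤ ∑ j', S i j' * |v j'| := by
        have hrw : (S *ᵥ v) i = ∑ j', S i j' * v j' := rfl
        rw [hrw]
        calc |∑ j', S i j' * v j'| ≤ ∑ j', |S i j' * v j'| :=
              Finset.abs_sum_le_sum_abs (fun j' => S i j' * v j') Finset.univ
          _ = ∑ j', S i j' * |v j'| := by
              apply Finset.sum_congr rfl
              intro j' _
              rw [abs_mul, abs_of_nonneg (show (0:ℝ) ≤ S i j' from hnonneg _ _)]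
      have h3 : ∑ j', S i j' * |v j'| ≤ (P *ᵥ w) (k.succAbove i) := by
        rw [Matrix.mulVec, show (P (k.succAbove i) ⬝ᵥ w) = ∑ l, P (k.succAbove i) l * w l
          from rfl]
        rw [Fin.sum_univ_succAbove (fun l => P (k.succAbove i) l * w l) k]
        rw [hwk, mul_zero, zero_add]
        apply le_of_eq
        apply Finset.sum_congr rfl
        intro j' _
        rw [hwsucc j', hS]
        rfl
      calc |v i| = |(S *ᵥ v) i| := h1
        _ ≤ ∑ j', S i j' * |v j'| := h2
        _ ≤ (P *ᵥ w) (k.succAbove i) := h3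
  exact hdet (det_one_sub_eq_zero_of_dominates P hnonneg hrowsum w hw0 hwne hdom)

lemma schur_facts {N : ℕ} (P : Matrix (Fin (N + 1)) (Fin (N + 1)) ℝ) (k : Fin (N + 1))
    (hM : IsUnit (1 - P).det) (hA : IsUnit (delMat (1 - P) k k).det) :
    (∀ i, (1 - P)⁻¹ (k.succAbove i) k
        = (1 - P)⁻¹ k k * ((delMat (1 - P) k k)⁻¹ *ᵥ delCol P k) i) ∧
    (1 - P)⁻¹ k k *
        (1 - P k k - delRow P k ⬝ᵥ ((delMat (1 - P) k k)⁻¹ *ᵥ delCol P k)) = 1 := by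
  classical
  set Q := (1 - P)⁻¹ with hQ
  set A := delMat (1 - P) k k with hAdef
  have hMQ : (1 - P) * Q = 1 := Matrix.mul_nonsing_inv _ hM
  have hrow : ∀ r, ∑ j, (1 - P) r j * Q j k = (1 : Matrix (Fin (N+1)) (Fin (N+1)) ℝ) r k := by
    intro r
    rw [← Matrix.mul_apply, hMQ]
  set q' : Fin N → ℝ := fun i => Q (k.succAbove i) k with hq'
  have hAq : A *ᵥ q' = Q k k • delCol P k := by
    funext i
    have hr := hrow (k.succAbove i)
    rw [Fin.sum_univ_succAbove (fun j => (1 - P) (k.succAbove i) j * Q j k) k] at hr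
    have hne : k.succAbove i ≠ k := Fin.succAbove_ne k i
    rw [Matrix.one_apply_ne hne] at hr
    have h1 : (1 - P) (k.succAbove i) k = - P (k.succAbove i) k := by
      simp [Matrix.sub_apply, Matrix.one_apply_ne hne]
    rw [h1] at hr
    have : (A *ᵥ q') i = ∑ j, (1 - P) (k.succAbove i) (k.succAbove j) * Q (k.succAbove j) k := rfl
    rw [this]
    simp only [Pi.smul_apply, smul_eq_mul, delCol]
    linarith [hr]
  have hq'eq : q' = Q k k • (A⁻¹ *ᵥ delCol P k) := by
    have h1 : A⁻¹ *ᵥ (A *ᵥ q') = q' := by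
      rw [Matrix.mulVec_mulVec, Matrix.nonsing_inv_mul _ hA, Matrix.one_mulVec]
    rw [← h1, hAq, Matrix.mulVec_smul]
  constructor
  · intro i
    have := congrFun hq'eq i
    simpa [hq', Pi.smul_apply, smul_eq_mul] using this
  · have hr := hrow k
    rw [Fin.sum_univ_succAbove (fun j => (1 - P) k j * Q j k) k] at hr
    rw [Matrix.one_apply_eq] at hr
    have h1 : (1 - P) k k = 1 - P k k := by simp [Matrix.sub_apply, Matrix.one_apply_eq]
    rw [h1] at hr
    have h2 : ∀ j, (1 - P) k (k.succAbove j) = - delRow P k j := by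
      intro j
      simp [Matrix.sub_apply, Matrix.one_apply_ne (Fin.succAbove_ne k j).symm, delRow]
    have h3 : ∀ j, q' j = Q k k * (A⁻¹ *ᵥ delCol P k) j := by
      intro j
      have := congrFun hq'eq j
      simpa [Pi.smul_apply, smul_eq_mul] using this
    set D := delRow P k ⬝ᵥ (A⁻¹ *ᵥ delCol P k) with hD
    have hsumeq : ∑ j, (1 - P) k (k.succAbove j) * Q (k.succAbove j) k = -(Q k k * D) := by
      have hterm : ∀ j ∈ Finset.univ, (1 - P) k (k.succAbove j) * Q (k.succAbove j) k
          = -(Q k k * (delRow P k j * (A⁻¹ *ᵥ delCol P k) j)) := by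
        intro j _
        rw [h2 j]
        have h3' : Q (k.succAbove j) k = Q k k * (A⁻¹ *ᵥ delCol P k) j := h3 j
        rw [h3']
        ring
      rw [Finset.sum_congr rfl hterm]
      rw [hD]
      have : delRow P k ⬝ᵥ (A⁻¹ *ᵥ delCol P k)
          = ∑ j, delRow P k j * (A⁻¹ *ᵥ delCol P k) j := rfl
      rw [this, Finset.mul_sum]
      rw [← Finset.sum_neg_distrib]
    rw [hsumeq] at hr
    linear_combination hr

/-- For a row substochastic matrix `P` with spectral radius less than
one and every index `m`:
`p_{m·}((I−P)(m|m))⁻¹p_{·m} / (1 − p_{mm} − p_{m·}((I−P)(m|m))⁻¹p_{·m})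
  = ∑_{k≠m} p_{km} f_{mk}((I−P)(k|k))⁻¹p_{·k} / (1 − p_{kk} − p_{k·}((I−P)(k|k))⁻¹p_{·k})`. -/
theorem substochastic_first_identity
    {n : ℕ} (P : Matrix (Fin (n + 1)) (Fin (n + 1)) ℝ)
    (hnonneg : ∀ i j, 0 ≤ P i j)
    (hrowsum : ∀ i, ∑ j, P i j ≤ 1)
    (hspec : ∀ μ ∈ spectrum ℂ (P.map (fun x => (x : ℂ))), ‖μ‖ < 1)
    (m : Fin (n + 1)) :
    (delRow P m ⬝ᵥ ((delMat (1 - P) m m)⁻¹ *ᵥ delCol P m)) /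
        (1 - P m m - delRow P m ⬝ᵥ ((delMat (1 - P) m m)⁻¹ *ᵥ delCol P m)) =
      ∑ k ∈ Finset.univ.erase m,
        P k m * (fSel m k ⬝ᵥ ((delMat (1 - P) k k)⁻¹ *ᵥ delCol P k)) /
          (1 - P k k - delRow P k ⬝ᵥ ((delMat (1 - P) k k)⁻¹ *ᵥ delCol P k)) := by
  classical
  have hMdet : (1 - P).det ≠ 0 := det_one_sub_ne_zero_of_spec P hspec
  have hM : IsUnit (1 - P).det := isUnit_iff_ne_zero.mpr hMdet
  have hAk : ∀ k, IsUnit (delMat (1 - P) k k).det := fun k =>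
    isUnit_iff_ne_zero.mpr (det_delMat_ne_zero P hnonneg hrowsum hMdet k)
  -- LHS
  obtain ⟨hcolm, hdm⟩ := schur_facts P m hM (hAk m)
  have hdm_ne : (1 - P m m - delRow P m ⬝ᵥ ((delMat (1 - P) m m)⁻¹ *ᵥ delCol P m)) ≠ 0 := by
    intro h
    rw [h, mul_zero] at hdm
    exact zero_ne_one hdm
  have hlhs : (delRow P m ⬝ᵥ ((delMat (1 - P) m m)⁻¹ *ᵥ delCol P m)) /
      (1 - P m m - delRow P m ⬝ᵥ ((delMat (1 - P) m m)⁻¹ *ᵥ delCol P m))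
      = (1 - P)⁻¹ m m * (1 - P m m) - 1 := by
    rw [div_eq_iff hdm_ne]
    linear_combination (-(1 - P m m)) * hdm
  -- RHS terms
  have hterm : ∀ k ∈ Finset.univ.erase m,
      P k m * (fSel m k ⬝ᵥ ((delMat (1 - P) k k)⁻¹ *ᵥ delCol P k)) /
        (1 - P k k - delRow P k ⬝ᵥ ((delMat (1 - P) k k)⁻¹ *ᵥ delCol P k))
      = (1 - P)⁻¹ m k * P k m := by
    intro k hk
    have hkm : k ≠ m := Finset.ne_of_mem_erase hk
    obtain ⟨j₀, hj₀⟩ := Fin.exists_succAbove_eq (Ne.symm hkm)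
    obtain ⟨hcol, hd⟩ := schur_facts P k hM (hAk k)
    have hd_ne : (1 - P k k - delRow P k ⬝ᵥ ((delMat (1 - P) k k)⁻¹ *ᵥ delCol P k)) ≠ 0 := by
      intro h
      rw [h, mul_zero] at hd
      exact zero_ne_one hd
    have hf : fSel m k ⬝ᵥ ((delMat (1 - P) k k)⁻¹ *ᵥ delCol P k)
        = ((delMat (1 - P) k k)⁻¹ *ᵥ delCol P k) j₀ := by
      have : fSel m k ⬝ᵥ ((delMat (1 - P) k k)⁻¹ *ᵥ delCol P k)
          = ∑ j, fSel m k j * ((delMat (1 - P) k k)⁻¹ *ᵥ delCol P k) j := rfl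
      rw [this, Finset.sum_eq_single j₀]
      · simp [fSel, hj₀]
      · intro j _ hj
        have : fSel m k j = 0 := by
          simp only [fSel, ite_eq_right_iff]
          intro hcon
          exact absurd (Fin.succAbove_right_injective (hcon.trans hj₀.symm)) hj
        rw [this, zero_mul]
      · simp
    have hQmk : (1 - P)⁻¹ m k
        = (1 - P)⁻¹ k k * ((delMat (1 - P) k k)⁻¹ *ᵥ delCol P k) j₀ := by
      rw [← hj₀]
      exact hcol j₀
    rw [hf, hQmk, div_eq_iff hd_ne]
    linear_combination (-(P k m * ((delMat (1 - P) k k)⁻¹ *ᵥ delCol P k) j₀)) * hd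
  rw [Finset.sum_congr rfl hterm, hlhs]
  have hsum : ∑ k ∈ Finset.univ.erase m, (1 - P)⁻¹ m k * P k m
      = (∑ k, (1 - P)⁻¹ m k * P k m) - (1 - P)⁻¹ m m * P m m := by
    rw [← Finset.sum_erase_add Finset.univ _ (Finset.mem_univ m)]
    ring
  have hmul : ∑ k, (1 - P)⁻¹ m k * P k m = (1 - P)⁻¹ m m - 1 := by
    have hQP : (1 - P)⁻¹ * P = (1 - P)⁻¹ - 1 := by
      have h1 : (1 - P)⁻¹ * (1 - P) = 1 := Matrix.nonsing_inv_mul _ hM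
      calc (1 - P)⁻¹ * P = (1 - P)⁻¹ * 1 - (1 - P)⁻¹ * (1 - P) := by
            rw [← Matrix.mul_sub, sub_sub_cancel]
        _ = (1 - P)⁻¹ - 1 := by rw [Matrix.mul_one, h1]
    rw [← Matrix.mul_apply, hQP, Matrix.sub_apply, Matrix.one_apply_eq]
  rw [hsum, hmul]
  ring
end

section
/- Let P = (p_{lm}) be an n×n row substochastic matrix (all entries nonnegative and each row sum at most 1) with spectral radius strictly less than one. Then for all indices l ≠ m: (1 − p_{mm}) f_{lm}((I−P)(m|m))⁻¹ p_{·m} / (1 − p_{mm} − p_{m·}((I−P)(m|m))⁻¹ p_{·m}) = p_{lm} / (1 − p_{ll} − p_{l·}((I−P)(l|l))⁻¹ p_{·l}) + Σ_{k≠l, k≠m} p_{km} f_{lk}((I−P)(k|k))⁻¹ p_{·k} / (1 − p_{kk} − p_{k·}((I−P)(k|k))⁻¹ p_{·k}). -/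
open Matrix Filter

section Aux
attribute [local instance] Matrix.linftyOpNormedAddCommGroup Matrix.linftyOpNormedRing
  Matrix.linftyOpNormedAlgebra

private theorem aux_entry_le_norm {k : ℕ} (A : Matrix (Fin (k+1)) (Fin (k+1)) ℝ) (i j : Fin (k+1)) :
    ‖A i j‖ ≤ ‖A‖ := by
  have h1 : ‖A i j‖₊ ≤ ∑ j', ‖A i j'‖₊ :=
    Finset.single_le_sum (f := fun j' => ‖A i j'‖₊) (fun _ _ => zero_le) (Finset.mem_univ j)
  have h2 : (∑ j', ‖A i j'‖₊) ≤ ‖A‖₊ := by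
    rw [Matrix.linfty_opNNNorm_def]
    exact Finset.le_sup (f := fun i => ∑ j', ‖A i j'‖₊) (Finset.mem_univ i)
  exact_mod_cast h1.trans h2

private noncomputable def auxEntryCLM {k : ℕ} (i j : Fin (k+1)) :
    Matrix (Fin (k+1)) (Fin (k+1)) ℝ →L[ℝ] ℝ :=
  LinearMap.mkContinuous
    { toFun := fun A => A i j
      map_add' := fun _ _ => rfl
      map_smul' := fun _ _ => rfl } 1
    (fun A => by show ‖A i j‖ ≤ 1 * ‖A‖; simpa using aux_entry_le_norm A i j)

private theorem aux_pow_nonneg {k : ℕ} {A : Matrix (Fin k) (Fin k) ℝ}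
    (hA : ∀ i j, 0 ≤ A i j) (m : ℕ) : ∀ i j, 0 ≤ (A ^ m) i j := by
  induction m with
  | zero => intro i j; simp [Matrix.one_apply]; split <;> simp
  | succ m ih =>
    intro i j
    rw [pow_succ, Matrix.mul_apply]
    exact Finset.sum_nonneg fun r _ => mul_nonneg (ih i r) (hA r j)

/-- Main structural lemma: a two-sided inverse of `1 - P` with nonnegative entries and
diagonal entries at least 1. -/
private theorem aux_inverse {n : ℕ} (P : Matrix (Fin (n + 1)) (Fin (n + 1)) ℝ)
    (hnonneg : ∀ i j, 0 ≤ P i j)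
    (hspec : ∀ μ ∈ spectrum ℂ (P.map (fun x => (x : ℂ))), ‖μ‖ < 1) :
    ∃ B : Matrix (Fin (n + 1)) (Fin (n + 1)) ℝ,
      (1 - P) * B = 1 ∧ B * (1 - P) = 1 ∧ (∀ i j, 0 ≤ B i j) ∧ (∀ i, 1 ≤ B i i) := by
  -- Step 1: `1 - P` is a unit.
  have hunit : IsUnit (1 - P) := by
    rw [Matrix.isUnit_iff_isUnit_det, isUnit_iff_ne_zero]
    intro hdet
    have h1 : (1 : ℂ) ∈ spectrum ℂ (P.map (fun x => (x : ℂ))) := by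
      rw [spectrum.mem_iff, Matrix.isUnit_iff_isUnit_det]
      have hmat : ((algebraMap ℂ (Matrix (Fin (n+1)) (Fin (n+1)) ℂ)) 1 -
          P.map (fun x => (x : ℂ))) = (1 - P).map (fun x => (x : ℂ)) := by
        ext i j
        simp [Matrix.map_apply, Matrix.one_apply, Matrix.sub_apply, Matrix.algebraMap_matrix_apply]
        split <;> simp
      have hd : ((1 - P).map (fun x => (x : ℂ))).det = ((1 - P).det : ℂ) := by
        rw [show ((1 - P).map fun x => (x:ℂ)) = Complex.ofRealHom.mapMatrix (1-P) from rfl,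
          ← RingHom.map_det]
        rfl
      rw [hmat, isUnit_iff_ne_zero, hd, hdet]
      simp
    have := hspec 1 h1
    simp at this
  -- Step 2: some power of `P` has row sums `< 1`.
  obtain ⟨N, hN1, hrows⟩ : ∃ N, 1 ≤ N ∧ ∀ i, ∑ j, (P ^ N) i j < 1 := by
    set Pc : Matrix (Fin (n+1)) (Fin (n+1)) ℂ := P.map (fun x => (x : ℂ)) with hPc
    have hrad : spectralRadius ℂ Pc < 1 := by
      have := spectrum.spectralRadius_lt_of_forall_lt Pc
        (r := 1) (fun z hz => by simpa [← NNReal.coe_lt_coe, coe_nnnorm] using hspec z hz)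
      simpa using this
    have hg := spectrum.pow_nnnorm_pow_one_div_tendsto_nhds_spectralRadius Pc
    have hev : ∀ᶠ N : ℕ in atTop, (‖Pc ^ N‖₊ : ENNReal) ^ (1 / (N:ℝ)) < 1 :=
      hg.eventually_lt_const hrad
    obtain ⟨N, hN, hN1⟩ := (hev.and (eventually_ge_atTop 1)).exists
    have hnorm : ‖Pc ^ N‖₊ < 1 := by
      by_contra h
      push_neg at h
      have : (1 : ENNReal) ≤ (‖Pc ^ N‖₊ : ENNReal) ^ (1 / (N:ℝ)) := by
        calc (1 : ENNReal) = 1 ^ (1 / (N:ℝ)) := by rw [ENNReal.one_rpow]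
          _ ≤ _ := ENNReal.rpow_le_rpow (by exact_mod_cast h) (by positivity)
      exact absurd hN (not_lt.2 this)
    refine ⟨N, hN1, fun i => ?_⟩
    have hmap : Pc ^ N = (P ^ N).map (fun x => (x : ℂ)) := by
      rw [hPc]; exact (Complex.ofRealHom.mapMatrix.map_pow P N).symm
    have hle : ∑ j, ‖(Pc ^ N) i j‖₊ ≤ ‖Pc ^ N‖₊ := by
      rw [Matrix.linfty_opNNNorm_def]
      exact Finset.le_sup (f := fun i => ∑ j, ‖(Pc ^ N) i j‖₊) (Finset.mem_univ i)
    have hsum : ∑ j, (P ^ N) i j = ((∑ j, ‖(Pc ^ N) i j‖₊ : NNReal) : ℝ) := by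
      push_cast
      refine Finset.sum_congr rfl fun j _ => ?_
      rw [hmap]
      simp only [Matrix.map_apply, coe_nnnorm, Complex.norm_real]
      rw [Real.norm_eq_abs, abs_of_nonneg (aux_pow_nonneg hnonneg N i j)]
    rw [hsum]
    exact_mod_cast lt_of_le_of_lt hle hnorm
  set A : Matrix (Fin (n+1)) (Fin (n+1)) ℝ := P ^ N with hAdef
  have hAnonneg : ∀ i j, 0 ≤ A i j := aux_pow_nonneg hnonneg N
  have hAnorm : ‖A‖ < 1 := by
    rw [Matrix.linfty_opNorm_def]
    have : ((Finset.univ : Finset (Fin (n+1))).sup fun i => ∑ j, ‖A i j‖₊) < 1 := by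
      rw [Finset.sup_lt_iff (by norm_num : (⊥ : NNReal) < 1)]
      intro i _
      have : ((∑ j, ‖A i j‖₊ : NNReal) : ℝ) < 1 := by
        have : ((∑ j, ‖A i j‖₊ : NNReal) : ℝ) = ∑ j, A i j := by
          push_cast
          exact Finset.sum_congr rfl fun j _ => by
            simp [coe_nnnorm, Real.norm_eq_abs, abs_of_nonneg (hAnonneg i j)]
        rw [this]; exact hrows i
      exact_mod_cast this
    exact_mod_cast this
  -- Step 3: geometric series for `(1 - A)⁻¹`.
  have hsA : HasSum (fun m : ℕ => A ^ m) (Ring.inverse (1 - A)) :=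
    hasSum_geom_series_inverse A hAnorm
  set G : Matrix (Fin (n+1)) (Fin (n+1)) ℝ := Ring.inverse (1 - A) with hGdef
  have hGentry : ∀ i j, HasSum (fun m : ℕ => (A ^ m) i j) (G i j) :=
    fun i j => (auxEntryCLM i j).hasSum hsA
  have hGnonneg : ∀ i j, 0 ≤ G i j :=
    fun i j => (hGentry i j).nonneg (fun m => aux_pow_nonneg hAnonneg m i j)
  have hGdiag : ∀ i, 1 ≤ G i i := by
    intro i
    have := le_hasSum (hGentry i i) 0 (fun m _ => aux_pow_nonneg hAnonneg m i i)
    simpa using this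
  have hAG : (1 - A) * G = 1 := Ring.mul_inverse_cancel _ (isUnit_one_sub_of_norm_lt_one hAnorm)
  -- Step 4: assemble `B = (∑_{j<N} P^j) * G`.
  set S : Matrix (Fin (n+1)) (Fin (n+1)) ℝ := ∑ j ∈ Finset.range N, P ^ j with hSdef
  have hSnonneg : ∀ i j, 0 ≤ S i j := by
    intro i j
    rw [hSdef, Matrix.sum_apply]
    exact Finset.sum_nonneg fun m _ => aux_pow_nonneg hnonneg m i j
  have hSdiag : ∀ i, 1 ≤ S i i := by
    intro i
    rw [hSdef, Matrix.sum_apply]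
    calc (1:ℝ) = (P ^ 0) i i := by simp [Matrix.one_apply]
      _ ≤ _ := Finset.single_le_sum (f := fun m => (P ^ m) i i)
        (fun m _ => aux_pow_nonneg hnonneg m i i) (Finset.mem_range.2 hN1)
  have hPS : (1 - P) * S = 1 - A := by
    have := mul_geom_sum P N
    have h2 : (1 - P) * S = -((P - 1) * S) := by
      rw [show (1:Matrix (Fin (n+1)) (Fin (n+1)) ℝ) - P = -(P - 1) from (neg_sub P 1).symm,
        neg_mul]
    rw [h2, hSdef, this, hAdef, neg_sub]
  refine ⟨S * G, ?_, ?_, ?_, ?_⟩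
  · rw [← Matrix.mul_assoc, hPS, hAG]
  · have hdet : IsUnit (1 - P).det := (Matrix.isUnit_iff_isUnit_det _).1 hunit
    have hr : (1 - P)⁻¹ = S * G := Matrix.inv_eq_right_inv (by rw [← Matrix.mul_assoc, hPS, hAG])
    rw [← hr]
    exact Matrix.nonsing_inv_mul _ hdet
  · intro i j
    rw [Matrix.mul_apply]
    exact Finset.sum_nonneg fun r _ => mul_nonneg (hSnonneg i r) (hGnonneg r j)
  · intro i
    calc (1:ℝ) ≤ S i i * G i i := one_le_mul_of_one_le_of_one_le (hSdiag i) (hGdiag i)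
      _ ≤ ∑ r, S i r * G r i := Finset.single_le_sum (f := fun r => S i r * G r i)
          (fun r _ => mul_nonneg (hSnonneg i r) (hGnonneg r i)) (Finset.mem_univ i)
      _ = (S * G) i i := (Matrix.mul_apply).symm
end Aux

section Main
variable {n : ℕ} {P B : Matrix (Fin (n + 1)) (Fin (n + 1)) ℝ}

/-- Each principal submatrix `(1-P)(k|k)` is invertible. -/
private theorem aux_subUnit (hBr : (1 - P) * B = 1) (hBl : B * (1 - P) = 1)
    (hBdiag : ∀ i, 1 ≤ B i i) (k : Fin (n + 1)) :
    IsUnit (delMat (1 - P) k k).det := by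
  rw [isUnit_iff_ne_zero]
  intro hdet
  obtain ⟨x, hx0, hxk⟩ := (Matrix.exists_mulVec_eq_zero_iff (M := delMat (1 - P) k k)).2 hdet
  set y : Fin (n + 1) → ℝ := Fin.insertNth (α := fun _ => ℝ) k (0:ℝ) x with hy
  have hyk : y k = 0 := by rw [hy]; exact Fin.insertNth_apply_same (α := fun _ => ℝ) k 0 x
  have hys : ∀ j, y (k.succAbove j) = x j := fun j => by rw [hy]; exact Fin.insertNth_apply_succAbove (α := fun _ => ℝ) k 0 x j
  set c : ℝ := ((1 - P) *ᵥ y) k with hc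
  have hmv : (1 - P) *ᵥ y = c • (Pi.single k 1 : Fin (n + 1) → ℝ) := by
    funext i
    rcases eq_or_ne i k with rfl | hik
    · simp [hc]
    · obtain ⟨j, rfl⟩ := Fin.exists_succAbove_eq hik
      have h1 : ((1 - P) *ᵥ y) (k.succAbove j) = (delMat (1 - P) k k *ᵥ x) j := by
        show ∑ r, (1 - P) (k.succAbove j) r * y r = _
        rw [Fin.sum_univ_succAbove _ k]
        simp only [hyk, hys, mul_zero, zero_add]
        rfl
      rw [h1, hxk]
      simp [Pi.single_eq_of_ne (Fin.succAbove_ne k j)]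
  have hyB : y = c • fun i => B i k := by
    have h2 : B *ᵥ ((1 - P) *ᵥ y) = y := by
      rw [Matrix.mulVec_mulVec, hBl, Matrix.one_mulVec]
    rw [← h2, hmv, Matrix.mulVec_smul, Matrix.mulVec_single_one]
    rfl
  have hck : c * B k k = 0 := by
    have := congrFun hyB k
    simpa [hyk] using this.symm
  have hc0 : c = 0 := by
    rcases mul_eq_zero.1 hck with h | h
    · exact h
    · exact absurd h (by have := hBdiag k; intro hh; rw [hh] at this; linarith)
  have hy0 : y = 0 := by rw [hyB, hc0, zero_smul]
  apply hx0
  funext j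
  have := congrFun hy0 (k.succAbove j)
  rwa [hys j] at this
end Main

section Main2
variable {n : ℕ} {P B : Matrix (Fin (n + 1)) (Fin (n + 1)) ℝ}

private theorem aux_col (hBr : (1 - P) * B = 1) (k : Fin (n + 1))
    (hdetk : IsUnit (delMat (1 - P) k k).det) :
    B k k * (1 - P k k - delRow P k ⬝ᵥ ((delMat (1 - P) k k)⁻¹ *ᵥ delCol P k)) = 1 ∧
      ∀ l, l ≠ k →
        B l k * (1 - P k k - delRow P k ⬝ᵥ ((delMat (1 - P) k k)⁻¹ *ᵥ delCol P k)) =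
          fSel l k ⬝ᵥ ((delMat (1 - P) k k)⁻¹ *ᵥ delCol P k) := by
  set w : Fin n → ℝ := (delMat (1 - P) k k)⁻¹ *ᵥ delCol P k with hw
  have hQv : ∀ i, ∑ r, (1 - P) i r * B r k = if i = k then (1:ℝ) else 0 := by
    intro i
    have h := congrFun (congrFun hBr i) k
    rw [Matrix.mul_apply] at h
    rw [h, Matrix.one_apply]
  set v' : Fin n → ℝ := fun j => B (k.succAbove j) k with hv'def
  have hMv' : delMat (1 - P) k k *ᵥ v' = B k k • delCol P k := by
    funext j
    have h0 := hQv (k.succAbove j)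
    rw [if_neg (Fin.succAbove_ne k j), Fin.sum_univ_succAbove _ k] at h0
    have h1 : (1 - P) (k.succAbove j) k = -P (k.succAbove j) k := by
      simp [Matrix.sub_apply, Matrix.one_apply_ne (Fin.succAbove_ne k j)]
    show ∑ j', delMat (1 - P) k k (j) j' * v' j' = B k k * delCol P k j
    simp only [delMat, Matrix.submatrix_apply, hv'def]
    have h2 : ∑ j', (1 - P) (k.succAbove j) (k.succAbove j') * B (k.succAbove j') k
        = - ((1 - P) (k.succAbove j) k * B k k) := by linarith [h0]
    rw [h2, h1]
    simp [delCol]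
    ring
  have hveq : v' = B k k • w := by
    have h3 : (delMat (1 - P) k k)⁻¹ *ᵥ (delMat (1 - P) k k *ᵥ v') = v' := by
      rw [Matrix.mulVec_mulVec, Matrix.nonsing_inv_mul _ hdetk, Matrix.one_mulVec]
    rw [← h3, hMv', Matrix.mulVec_smul, hw]
  have hDk : B k k * (1 - P k k - delRow P k ⬝ᵥ w) = 1 := by
    have h0 := hQv k
    rw [if_pos rfl, Fin.sum_univ_succAbove _ k] at h0
    have h1 : (1 - P) k k = 1 - P k k := by simp [Matrix.sub_apply, Matrix.one_apply]
    have h2 : ∀ j, (1 - P) k (k.succAbove j) = -P k (k.succAbove j) := by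
      intro j
      simp [Matrix.sub_apply, Matrix.one_apply_ne (Ne.symm (Fin.succAbove_ne k j))]
    have h3 : ∑ j, (1 - P) k (k.succAbove j) * B (k.succAbove j) k
        = - (B k k * (delRow P k ⬝ᵥ w)) := by
      have : ∀ j, B (k.succAbove j) k = B k k * w j := by
        intro j
        have := congrFun hveq j
        simpa [hv'def] using this
      simp only [h2, this, dotProduct, delRow, Finset.mul_sum, ← Finset.sum_neg_distrib]
      exact Finset.sum_congr rfl fun j _ => by ring
    rw [h1, h3] at h0
    calc B k k * (1 - P k k - delRow P k ⬝ᵥ w)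
        = (1 - P k k) * B k k + -(B k k * (delRow P k ⬝ᵥ w)) := by ring
      _ = 1 := h0
  refine ⟨hDk, fun l hl => ?_⟩
  obtain ⟨j, hj⟩ := Fin.exists_succAbove_eq hl
  have hfs : fSel l k ⬝ᵥ w = w j := by
    rw [dotProduct]
    rw [Finset.sum_eq_single j]
    · simp [fSel, hj]
    · intro j' _ hne
      have : k.succAbove j' ≠ l := by
        rw [← hj]
        exact fun hc => hne (Fin.succAbove_right_injective hc)
      simp [fSel, this]
    · intro h; exact absurd (Finset.mem_univ j) h
  have hBl : B l k = B k k * w j := by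
    rw [← hj]
    have := congrFun hveq j
    simpa [hv'def] using this
  rw [hfs, hBl]
  calc B k k * w j * (1 - P k k - delRow P k ⬝ᵥ w)
      = w j * (B k k * (1 - P k k - delRow P k ⬝ᵥ w)) := by ring
    _ = w j := by rw [hDk]; ring
end Main2

theorem substochastic_second_identity'
    {n : ℕ} (P : Matrix (Fin (n + 1)) (Fin (n + 1)) ℝ)
    (hBex : ∃ B : Matrix (Fin (n + 1)) (Fin (n + 1)) ℝ,
      (1 - P) * B = 1 ∧ B * (1 - P) = 1 ∧ (∀ i j, 0 ≤ B i j) ∧ (∀ i, 1 ≤ B i i))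
    (l m : Fin (n + 1)) (hlm : l ≠ m) :
    (1 - P m m) * (fSel l m ⬝ᵥ ((delMat (1 - P) m m)⁻¹ *ᵥ delCol P m)) /
        (1 - P m m - delRow P m ⬝ᵥ ((delMat (1 - P) m m)⁻¹ *ᵥ delCol P m)) =
      P l m / (1 - P l l - delRow P l ⬝ᵥ ((delMat (1 - P) l l)⁻¹ *ᵥ delCol P l)) +
        ∑ k ∈ (Finset.univ.erase l).erase m,
          P k m * (fSel l k ⬝ᵥ ((delMat (1 - P) k k)⁻¹ *ᵥ delCol P k)) /
            (1 - P k k - delRow P k ⬝ᵥ ((delMat (1 - P) k k)⁻¹ *ᵥ delCol P k)) := by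
  obtain ⟨B, hBr, hBl, hBnn, hBdiag⟩ := hBex
  have hdet : ∀ k, IsUnit (delMat (1 - P) k k).det := aux_subUnit hBr hBl hBdiag
  set D : Fin (n + 1) → ℝ :=
    fun k => 1 - P k k - delRow P k ⬝ᵥ ((delMat (1 - P) k k)⁻¹ *ᵥ delCol P k) with hDdef
  set W : Fin (n + 1) → Fin (n + 1) → ℝ :=
    fun l k => fSel l k ⬝ᵥ ((delMat (1 - P) k k)⁻¹ *ᵥ delCol P k) with hWdef
  have hD : ∀ k, B k k * D k = 1 := fun k => (aux_col hBr k (hdet k)).1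
  have hW : ∀ k l', l' ≠ k → B l' k * D k = W l' k := fun k l' h =>
    (aux_col hBr k (hdet k)).2 l' h
  have hDne : ∀ k, D k ≠ 0 := by
    intro k h
    have := hD k
    rw [h, mul_zero] at this
    norm_num at this
  have hBW : ∀ k l', l' ≠ k → W l' k / D k = B l' k := fun k l' h => by
    rw [div_eq_iff (hDne k)]
    exact (hW k l' h).symm
  have hBD : ∀ k, 1 / D k = B k k := fun k => by
    rw [div_eq_iff (hDne k)]
    exact (hD k).symm
  -- the key linear-algebra identity
  have hkey : (1 - P m m) * B l m =
      P l m * B l l + ∑ k ∈ (Finset.univ.erase l).erase m, P k m * B l k := by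
    have h := congrFun (congrFun hBl l) m
    rw [Matrix.mul_apply, Matrix.one_apply_ne hlm] at h
    have h2 : ∀ k : Fin (n + 1), B l k * (1 - P) k m
        = B l k * (if k = m then (1:ℝ) else 0) - B l k * P k m := by
      intro k
      by_cases hk : k = m <;> simp [Matrix.sub_apply, Matrix.one_apply, hk] <;> ring
    rw [Finset.sum_congr rfl (fun k _ => h2 k), Finset.sum_sub_distrib] at h
    have h3 : ∑ k, B l k * (if k = m then (1:ℝ) else 0) = B l m := by
      simp
    rw [h3] at h
    have h4 : ∑ k, B l k * P k m
        = B l m * P m m + (B l l * P l m + ∑ k ∈ (Finset.univ.erase m).erase l,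
          B l k * P k m) := by
      rw [← Finset.add_sum_erase _ _ (Finset.mem_univ m),
        ← Finset.add_sum_erase _ (fun k => B l k * P k m)
          (Finset.mem_erase.2 ⟨hlm, Finset.mem_univ l⟩)]
    have h5 : B l m = ∑ k, B l k * P k m := by linarith
    rw [h4, Finset.erase_right_comm] at h5
    have h6 : ∑ k ∈ (Finset.univ.erase l).erase m, B l k * P k m
        = ∑ k ∈ (Finset.univ.erase l).erase m, P k m * B l k :=
      Finset.sum_congr rfl fun k _ => mul_comm _ _
    rw [h6] at h5
    calc (1 - P m m) * B l m = B l m - B l m * P m m := by ring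
      _ = B l l * P l m + ∑ k ∈ (Finset.univ.erase l).erase m, P k m * B l k := by
          linarith
      _ = P l m * B l l + ∑ k ∈ (Finset.univ.erase l).erase m, P k m * B l k := by
          ring
  have hlhs : (1 - P m m) * W l m / D m = (1 - P m m) * B l m := by
    rw [mul_div_assoc, hBW m l hlm]
  have hrhs1 : P l m / D l = P l m * B l l := by
    rw [div_eq_mul_one_div, hBD l]
  have hrhs2 : ∀ k ∈ (Finset.univ.erase l).erase m,
      P k m * W l k / D k = P k m * B l k := by
    intro k hk
    have hkl : k ≠ l := (Finset.mem_erase.1 (Finset.mem_erase.1 hk).2).1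
    rw [mul_div_assoc, hBW k l (Ne.symm hkl)]
  rw [hlhs, hrhs1, Finset.sum_congr rfl hrhs2, hkey]

/-- For a row substochastic matrix `P` with spectral radius less than
one and indices `l ≠ m`:
`(1 − p_{mm}) f_{lm}((I−P)(m|m))⁻¹p_{·m} / (1 − p_{mm} − p_{m·}((I−P)(m|m))⁻¹p_{·m})
  = p_{lm} / (1 − p_{ll} − p_{l·}((I−P)(l|l))⁻¹p_{·l})
    + ∑_{k≠l,k≠m} p_{km} f_{lk}((I−P)(k|k))⁻¹p_{·k} /
        (1 − p_{kk} − p_{k·}((I−P)(k|k))⁻¹p_{·k})`. -/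
theorem substochastic_second_identity
    {n : ℕ} (P : Matrix (Fin (n + 1)) (Fin (n + 1)) ℝ)
    (hnonneg : ∀ i j, 0 ≤ P i j)
    (hrowsum : ∀ i, ∑ j, P i j ≤ 1)
    (hspec : ∀ μ ∈ spectrum ℂ (P.map (fun x => (x : ℂ))), ‖μ‖ < 1)
    (l m : Fin (n + 1)) (hlm : l ≠ m) :
    (1 - P m m) * (fSel l m ⬝ᵥ ((delMat (1 - P) m m)⁻¹ *ᵥ delCol P m)) /
        (1 - P m m - delRow P m ⬝ᵥ ((delMat (1 - P) m m)⁻¹ *ᵥ delCol P m)) =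
      P l m / (1 - P l l - delRow P l ⬝ᵥ ((delMat (1 - P) l l)⁻¹ *ᵥ delCol P l)) +
        ∑ k ∈ (Finset.univ.erase l).erase m,
          P k m * (fSel l k ⬝ᵥ ((delMat (1 - P) k k)⁻¹ *ᵥ delCol P k)) /
            (1 - P k k - delRow P k ⬝ᵥ ((delMat (1 - P) k k)⁻¹ *ᵥ delCol P k)) := by
  exact substochastic_second_identity' P (aux_inverse P hnonneg hspec) l m hlm
end

section
/- Let B = (b_{ij}) be an n×n real matrix all of whose principal minors are nonzero (in particular det(B) ≠ 0 and det(B(l|l)) ≠ 0 for every l). Then for every index m: b_{m·}(B(m|m))⁻¹ b_{·m} / (b_{mm} − b_{m·}(B(m|m))⁻¹ b_{·m}) = Σ_{l≠m} b_{lm} f_{ml}(B(l|l))⁻¹ b_{·l} / (b_{ll} − b_{l·}(B(l|l))⁻¹ b_{·l}). -/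
open Matrix

/-- For an `(n+1) × (n+1)` real matrix `B` all of whose principal
minors are nonzero, and every index `m`:
`b_{m·}(B(m|m))⁻¹b_{·m} / (b_{mm} − b_{m·}(B(m|m))⁻¹b_{·m})
  = ∑_{l≠m} b_{lm} f_{ml}(B(l|l))⁻¹b_{·l} / (b_{ll} − b_{l·}(B(l|l))⁻¹b_{·l})`. -/
theorem first_identity_of_nonzero_principal_minors
    {n : ℕ} (B : Matrix (Fin (n + 1)) (Fin (n + 1)) ℝ)
    (hpm : ∀ S : Finset (Fin (n + 1)),
      (B.submatrix (fun i : S => (i : Fin (n + 1))) (fun j : S => (j : Fin (n + 1)))).det ≠ 0)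
    (m : Fin (n + 1)) :
    (delRow B m ⬝ᵥ ((delMat B m m)⁻¹ *ᵥ delCol B m)) /
        (B m m - delRow B m ⬝ᵥ ((delMat B m m)⁻¹ *ᵥ delCol B m)) =
      ∑ l ∈ Finset.univ.erase m,
        B l m * (fSel m l ⬝ᵥ ((delMat B l l)⁻¹ *ᵥ delCol B l)) /
          (B l l - delRow B l ⬝ᵥ ((delMat B l l)⁻¹ *ᵥ delCol B l)) := by
  classical
  -- det B ≠ 0
  have hdetB : B.det ≠ 0 := by
    have h := hpm Finset.univ
    let e : {x // x ∈ (Finset.univ : Finset (Fin (n+1)))} ≃ Fin (n+1) :=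
      ⟨fun x => x, fun x => ⟨x, Finset.mem_univ x⟩, fun _ => rfl, fun _ => rfl⟩
    have : B = (B.submatrix (fun i : (Finset.univ : Finset (Fin (n+1))) => (i : Fin (n+1)))
        (fun j : (Finset.univ : Finset (Fin (n+1))) => (j : Fin (n+1)))).submatrix e.symm e.symm := rfl
    rw [this, Matrix.det_submatrix_equiv_self]
    exact h
  have hBu : IsUnit B.det := isUnit_iff_ne_zero.mpr hdetB
  -- det (delMat B l l) ≠ 0
  have hdl : ∀ l, (delMat B l l).det ≠ 0 := by
    intro l
    have h := hpm ({l}ᶜ)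
    have hinj : Function.Injective
        (fun i : Fin n => (⟨l.succAbove i, by simp [Fin.succAbove_ne]⟩ :
          {x // x ∈ ({l}ᶜ : Finset (Fin (n+1)))})) := by
      intro a b hab
      exact Fin.succAbove_right_injective (congrArg Subtype.val hab)
    have hsurj : Function.Surjective
        (fun i : Fin n => (⟨l.succAbove i, by simp [Fin.succAbove_ne]⟩ :
          {x // x ∈ ({l}ᶜ : Finset (Fin (n+1)))})) := by
      rintro ⟨x, hx⟩
      have hxl : x ≠ l := by simpa using hx
      obtain ⟨j, hj⟩ := Fin.exists_succAbove_eq hxl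
      exact ⟨j, by simp [hj]⟩
    let e : Fin n ≃ {x // x ∈ ({l}ᶜ : Finset (Fin (n+1)))} :=
      Equiv.ofBijective _ ⟨hinj, hsurj⟩
    have : delMat B l l = (B.submatrix (fun i : ({l}ᶜ : Finset (Fin (n+1))) => (i : Fin (n+1)))
        (fun j : ({l}ᶜ : Finset (Fin (n+1))) => (j : Fin (n+1)))).submatrix e e := rfl
    rw [this, Matrix.det_submatrix_equiv_self]
    exact h
  set x : Fin (n+1) → Fin n → ℝ := fun l => (delMat B l l)⁻¹ *ᵥ delCol B l with hxdef
  set d : Fin (n+1) → ℝ := fun l => B l l - delRow B l ⬝ᵥ x l with hddef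
  set v : Fin (n+1) → Fin (n+1) → ℝ := fun l => Fin.insertNth l 1 (-(x l)) with hvdef
  have h1 : ∀ l, delMat B l l *ᵥ x l = delCol B l := by
    intro l
    show delMat B l l *ᵥ ((delMat B l l)⁻¹ *ᵥ delCol B l) = delCol B l
    rw [Matrix.mulVec_mulVec, Matrix.mul_nonsing_inv _ (isUnit_iff_ne_zero.mpr (hdl l)),
      Matrix.one_mulVec]
  have h2 : ∀ l, B *ᵥ v l = Pi.single l (d l) := by
    intro l
    funext k
    have hsum : (B *ᵥ v l) k = B k l * v l l + ∑ i, B k (l.succAbove i) * v l (l.succAbove i) :=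
      Fin.sum_univ_succAbove (fun j => B k j * v l j) l
    have hvl : v l l = 1 := by simp [hvdef]
    have hvs : ∀ i, v l (l.succAbove i) = -(x l i) := by intro i; simp [hvdef]
    rcases eq_or_ne k l with rfl | hk
    · rw [hsum, hvl, Pi.single_eq_same]
      simp only [hvs, mul_neg, Finset.sum_neg_distrib, mul_one]
      show B k k - delRow B k ⬝ᵥ x k = d k
      rfl
    · obtain ⟨i, hi⟩ := Fin.exists_succAbove_eq hk
      rw [hsum, hvl, Pi.single_eq_of_ne hk, mul_one]
      have hc : (delMat B l l *ᵥ x l) i = delCol B l i := by rw [h1 l]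
      have : ∑ j, B k (l.succAbove j) * v l (l.succAbove j)
          = -((delMat B l l *ᵥ x l) i) := by
        rw [Matrix.mulVec]
        simp only [hvs, mul_neg, Finset.sum_neg_distrib, dotProduct, delMat,
          Matrix.submatrix_apply, ← hi]
      rw [this, hc]
      show B k l + -(B (l.succAbove i) l) = 0
      rw [hi]; ring
  have h3 : ∀ l, d l ≠ 0 := by
    intro l hdl0
    have h0 : B *ᵥ v l = 0 := by rw [h2 l, hdl0, Pi.single_zero]
    have : v l = 0 := by
      have := congrArg (fun w => B⁻¹ *ᵥ w) h0
      simpa [Matrix.mulVec_mulVec, Matrix.nonsing_inv_mul _ hBu, Matrix.one_mulVec,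
        Matrix.mulVec_zero] using this
    have h1' : v l l = 1 := by simp [hvdef]
    rw [this] at h1'
    simpa using h1'
  have h4 : ∀ l k, B⁻¹ k l * d l = v l k := by
    intro l k
    have hv : B⁻¹ *ᵥ (B *ᵥ v l) = v l := by
      rw [Matrix.mulVec_mulVec, Matrix.nonsing_inv_mul _ hBu, Matrix.one_mulVec]
    rw [h2 l] at hv
    have := congrFun hv k
    rw [← this]
    simp [Matrix.mulVec, dotProduct, Pi.single_apply, mul_ite]
  -- LHS
  have h5 : B⁻¹ m m * d m = 1 := by
    rw [h4 m m]; simp [hvdef]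
  have hLHS : delRow B m ⬝ᵥ x m / d m = B m m * B⁻¹ m m - 1 := by
    have hd : delRow B m ⬝ᵥ x m = B m m - d m := by simp only [hddef]; ring
    rw [hd, div_eq_iff (h3 m)]
    linear_combination (-(B m m)) * h5
  have hterm : ∀ l ∈ Finset.univ.erase m,
      B l m * (fSel m l ⬝ᵥ x l) / d l = -(B⁻¹ m l * B l m) := by
    intro l hl
    have hml : m ≠ l := (Finset.ne_of_mem_erase hl).symm
    obtain ⟨j, hj⟩ := Fin.exists_succAbove_eq hml
    have hsel : fSel m l ⬝ᵥ x l = x l j := by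
      rw [dotProduct]
      have : ∀ j' : Fin n, (l.succAbove j' = m) = (j' = j) := by
        intro j'
        simp only [eq_iff_iff]
        constructor
        · intro h; exact Fin.succAbove_right_injective (h.trans hj.symm)
        · rintro rfl; exact hj
      simp [fSel, this]
    have hxj : x l j = -(B⁻¹ m l * d l) := by
      have hv : v l m = -(x l j) := by rw [← hj]; simp [hvdef]
      have := h4 l m
      rw [hv] at this
      linarith [this]
    rw [hsel, hxj, div_eq_iff (h3 l)]
    ring
  rw [show (delRow B m ⬝ᵥ ((delMat B m m)⁻¹ *ᵥ delCol B m)) /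
        (B m m - delRow B m ⬝ᵥ ((delMat B m m)⁻¹ *ᵥ delCol B m)) = delRow B m ⬝ᵥ x m / d m from rfl,
    hLHS, Finset.sum_congr rfl hterm]
  have hinv : ∑ l, B⁻¹ m l * B l m = 1 := by
    have := Matrix.nonsing_inv_mul B hBu
    have h := congrFun (congrFun this m) m
    simpa [Matrix.mul_apply] using h
  rw [Finset.sum_neg_distrib, Finset.sum_erase_eq_sub (Finset.mem_univ m), hinv]
  ring
end

section
/- Let B = (b_{ij}) be an n×n real matrix all of whose principal minors are nonzero (in particular det(B) ≠ 0 and det(B(l|l)) ≠ 0 for every l). Then for all indices l ≠ m: − b_{mm} f_{lm}(B(m|m))⁻¹ b_{·m} / (b_{mm} − b_{m·}(B(m|m))⁻¹ b_{·m}) = − b_{lm} / (b_{ll} − b_{l·}(B(l|l))⁻¹ b_{·l}) + Σ_{k≠l, k≠m} b_{km} f_{lk}(B(k|k))⁻¹ b_{·k} / (b_{kk} − b_{k·}(B(k|k))⁻¹ b_{·k}). -/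
open Matrix

-- aux: det of delMat nonzero
lemma delMat_det_ne {n : ℕ} (B : Matrix (Fin (n + 1)) (Fin (n + 1)) ℝ)
    (hpm : ∀ S : Finset (Fin (n + 1)),
      (B.submatrix (fun i : S => (i : Fin (n + 1))) (fun j : S => (j : Fin (n + 1)))).det ≠ 0)
    (k : Fin (n + 1)) : (delMat B k k).det ≠ 0 := by
  classical
  set S : Finset (Fin (n + 1)) := Finset.univ.erase k with hS
  have hbij : Function.Bijective (fun i : Fin n =>
      (⟨k.succAbove i, by simp [hS, Fin.succAbove_ne]⟩ : S)) := by
    constructor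
    · intro a b hab
      exact Fin.succAbove_right_injective (p := k) (by simpa using congrArg Subtype.val hab)
    · rintro ⟨x, hx⟩
      have hxk : x ≠ k := by simpa [hS] using hx
      obtain ⟨i, hi⟩ := Fin.exists_succAbove_eq hxk
      exact ⟨i, by simp [hi]⟩
  let e : Fin n ≃ S := Equiv.ofBijective _ hbij
  have : delMat B k k =
      (B.submatrix (fun i : S => (i : Fin (n + 1))) (fun j : S => (j : Fin (n + 1)))).submatrix e e := by
    ext i j
    simp [delMat, e, Equiv.ofBijective]
  rw [this, Matrix.det_submatrix_equiv_self]
  exact hpm S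

lemma det_ne {n : ℕ} (B : Matrix (Fin (n + 1)) (Fin (n + 1)) ℝ)
    (hpm : ∀ S : Finset (Fin (n + 1)),
      (B.submatrix (fun i : S => (i : Fin (n + 1))) (fun j : S => (j : Fin (n + 1)))).det ≠ 0) :
    B.det ≠ 0 := by
  have := hpm Finset.univ
  rwa [show (B.submatrix (fun i : (Finset.univ : Finset (Fin (n+1))) => (i : Fin (n + 1)))
      (fun j : (Finset.univ : Finset (Fin (n+1))) => (j : Fin (n + 1)))) =
      B.submatrix (Equiv.subtypeUnivEquiv (fun x => Finset.mem_univ x))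
        (Equiv.subtypeUnivEquiv (fun x => Finset.mem_univ x)) from rfl,
    Matrix.det_submatrix_equiv_self] at this


-- key lemma
lemma key {n : ℕ} (B : Matrix (Fin (n + 1)) (Fin (n + 1)) ℝ)
    (hdet : B.det ≠ 0) (k : Fin (n + 1)) (hsub : (delMat B k k).det ≠ 0) (l : Fin (n + 1)) :
    (if l = k then 1 else -(fSel l k ⬝ᵥ ((delMat B k k)⁻¹ *ᵥ delCol B k))) =
      B⁻¹ l k * (B k k - delRow B k ⬝ᵥ ((delMat B k k)⁻¹ *ᵥ delCol B k)) := by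
  classical
  set x : Fin n → ℝ := (delMat B k k)⁻¹ *ᵥ delCol B k with hx
  set d : ℝ := B k k - delRow B k ⬝ᵥ x with hd
  have hfSel : ∀ i : Fin (n + 1), i ≠ k → ∀ v : Fin n → ℝ,
      fSel i k ⬝ᵥ v = ∑ j : Fin n, (if k.succAbove j = i then v j else 0) := by
    intro i hi v
    simp only [fSel, dotProduct]
    exact Finset.sum_congr rfl fun j _ => by split <;> simp
  have hfSel' : ∀ j : Fin n, ∀ v : Fin n → ℝ, fSel (k.succAbove j) k ⬝ᵥ v = v j := by
    intro j v
    rw [hfSel _ (Fin.succAbove_ne k j) v, Finset.sum_eq_single j]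
    · simp
    · intro b _ hb
      simp [Fin.succAbove_right_injective.eq_iff, hb]
    · simp
  set y : Fin (n + 1) → ℝ := fun i => if i = k then 1 else -(fSel i k ⬝ᵥ x) with hy
  have hyk : y k = 1 := by simp [hy]
  have hysucc : ∀ j : Fin n, y (k.succAbove j) = -(x j) := fun j => by
    simp [hy, Fin.succAbove_ne, hfSel' j]
  have hmx : delMat B k k *ᵥ x = delCol B k := by
    rw [hx, Matrix.mulVec_mulVec, Matrix.mul_nonsing_inv _ (isUnit_iff_ne_zero.2 hsub),
      Matrix.one_mulVec]
  have hBy : B *ᵥ y = fun i => if i = k then d else 0 := by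
    funext i
    have h1 : (B *ᵥ y) i = B i k * y k + ∑ j : Fin n, B i (k.succAbove j) * y (k.succAbove j) := by
      simp only [Matrix.mulVec, dotProduct]
      exact Fin.sum_univ_succAbove (fun j => B i j * y j) k
    have h2 : (B *ᵥ y) i = B i k - ∑ j : Fin n, B i (k.succAbove j) * x j := by
      rw [h1, hyk, mul_one]
      rw [Finset.sum_congr rfl fun j _ => by rw [hysucc j]]
      simp [sub_eq_add_neg, Finset.sum_neg_distrib]
    rw [h2]
    rcases eq_or_ne i k with rfl | hik
    · rw [if_pos rfl, hd]
      rfl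
    · rw [if_neg hik]
      obtain ⟨i', rfl⟩ := Fin.exists_succAbove_eq (Ne.symm hik).symm
      have : ∑ j : Fin n, B (k.succAbove i') (k.succAbove j) * x j
          = (delMat B k k *ᵥ x) i' := rfl
      rw [this, hmx]
      simp [delCol, sub_self]
  have hyeq : y = fun l => B⁻¹ l k * d := by
    have h3 : y = B⁻¹ *ᵥ (B *ᵥ y) := by
      rw [Matrix.mulVec_mulVec, Matrix.nonsing_inv_mul _ (isUnit_iff_ne_zero.2 hdet),
        Matrix.one_mulVec]
    funext i
    rw [h3, hBy]
    simp only [Matrix.mulVec, dotProduct, mul_ite, mul_zero]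
    rw [Finset.sum_ite_eq' Finset.univ k (fun j => B⁻¹ i j * d)]
    simp
  have := congrFun hyeq l
  rw [hy] at this
  exact this


/-- For an `(n+1) × (n+1)` real matrix `B` all of whose principal
minors are nonzero, and indices `l ≠ m`:
`− b_{mm} f_{lm}(B(m|m))⁻¹b_{·m} / (b_{mm} − b_{m·}(B(m|m))⁻¹b_{·m})
  = − b_{lm} / (b_{ll} − b_{l·}(B(l|l))⁻¹b_{·l})
    + ∑_{k≠l,k≠m} b_{km} f_{lk}(B(k|k))⁻¹b_{·k} / (b_{kk} − b_{k·}(B(k|k))⁻¹b_{·k})`. -/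
theorem second_identity_of_nonzero_principal_minors
    {n : ℕ} (B : Matrix (Fin (n + 1)) (Fin (n + 1)) ℝ)
    (hpm : ∀ S : Finset (Fin (n + 1)),
      (B.submatrix (fun i : S => (i : Fin (n + 1))) (fun j : S => (j : Fin (n + 1)))).det ≠ 0)
    (l m : Fin (n + 1)) (hlm : l ≠ m) :
    -(B m m * (fSel l m ⬝ᵥ ((delMat B m m)⁻¹ *ᵥ delCol B m))) /
        (B m m - delRow B m ⬝ᵥ ((delMat B m m)⁻¹ *ᵥ delCol B m)) =
      -(B l m) / (B l l - delRow B l ⬝ᵥ ((delMat B l l)⁻¹ *ᵥ delCol B l)) +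
        ∑ k ∈ (Finset.univ.erase l).erase m,
          B k m * (fSel l k ⬝ᵥ ((delMat B k k)⁻¹ *ᵥ delCol B k)) /
            (B k k - delRow B k ⬝ᵥ ((delMat B k k)⁻¹ *ᵥ delCol B k)) := by
  classical
  have hdet := det_ne B hpm
  have hsub := fun k => delMat_det_ne B hpm k
  set A := B⁻¹ with hA
  set d : Fin (n + 1) → ℝ :=
    fun k => B k k - delRow B k ⬝ᵥ ((delMat B k k)⁻¹ *ᵥ delCol B k) with hdd
  -- d k * A k k = 1
  have hdk : ∀ k, A k k * d k = 1 := by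
    intro k
    have := key B hdet k (hsub k) k
    rw [if_pos rfl] at this
    exact this.symm
  have hdne : ∀ k, d k ≠ 0 := fun k h => by
    have := hdk k; rw [h, mul_zero] at this; simp at this
  -- fSel value
  have hf : ∀ k, l ≠ k → fSel l k ⬝ᵥ ((delMat B k k)⁻¹ *ᵥ delCol B k) = -(A l k * d k) := by
    intro k hk
    have := key B hdet k (hsub k) l
    rw [if_neg hk] at this
    linarith [this]
  -- AB = 1
  have hAB : ∑ k, A l k * B k m = 0 := by
    have h1 : A * B = 1 := Matrix.nonsing_inv_mul _ (isUnit_iff_ne_zero.2 hdet)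
    have := congrFun (congrFun h1 l) m
    rw [Matrix.one_apply_ne hlm] at this
    simpa [Matrix.mul_apply] using this
  -- split the sum
  have hm : m ∈ Finset.univ.erase l := Finset.mem_erase.2 ⟨Ne.symm hlm, Finset.mem_univ m⟩
  have hsplit : ∑ k, A l k * B k m =
      A l m * B m m + (A l l * B l m + ∑ k ∈ (Finset.univ.erase l).erase m, A l k * B k m) := by
    rw [← Finset.add_sum_erase _ _ (Finset.mem_univ l),
      ← Finset.add_sum_erase _ _ hm]
    ring
  -- rewrite each fraction
  have hrw : ∀ k, B k k - delRow B k ⬝ᵥ ((delMat B k k)⁻¹ *ᵥ delCol B k) = d k := fun k => rfl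
  rw [hf m hlm]
  simp only [hrw]
  have hterm : ∀ k ∈ (Finset.univ.erase l).erase m,
      B k m * (fSel l k ⬝ᵥ ((delMat B k k)⁻¹ *ᵥ delCol B k)) / d k = -(A l k * B k m) := by
    intro k hk
    have hkl : l ≠ k := Ne.symm (Finset.mem_erase.1 (Finset.mem_erase.1 hk).2).1
    rw [hf k hkl]
    field_simp [hdne k]
  rw [Finset.sum_congr rfl hterm]
  have hL : -(B m m * -(A l m * d m)) / d m = B m m * A l m := by
    field_simp [hdne m]
  rw [hL]
  have hsum : ∑ k ∈ (Finset.univ.erase l).erase m, -(A l k * B k m)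
      = A l m * B m m + A l l * B l m := by
    rw [hsplit] at hAB
    rw [Finset.sum_neg_distrib]
    linarith
  rw [hsum]
  have hdl : -B l m / d l = -(A l l * B l m) := by
    rw [div_eq_iff (hdne l)]
    linear_combination B l m * hdk l
  rw [hdl]
  ring
end

section
/- Let B = (b_{ij}) be an n×n real matrix and let l ≠ m be indices. Then f_{ml} · adj(B(l|l)) · b_{·l} = (−1)^{m+l+1} det(B(l|m)). -/
open Matrix

/-- For an `(n+1) × (n+1)` real matrix `B` and indices `l ≠ m`:
`f_{ml} · adj(B(l|l)) · b_{·l} = (−1)^{m+l+1} det B(l|m)`. -/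
theorem fSel_adjugate_delCol_eq
    {n : ℕ} (B : Matrix (Fin (n + 1)) (Fin (n + 1)) ℝ)
    (l m : Fin (n + 1)) (hlm : l ≠ m) :
    fSel m l ⬝ᵥ ((delMat B l l).adjugate *ᵥ delCol B l) =
      (-1 : ℝ) ^ ((m : ℕ) + (l : ℕ) + 1) * (delMat B l m).det := by
  obtain ⟨j₀, hj₀⟩ := Fin.exists_succAbove_eq (Ne.symm hlm)
  -- Step 1: the dot product with the selector vector picks out coordinate `j₀`,
  -- and the adjugate-mulVec is a Cramer determinant.
  have hdot : fSel m l ⬝ᵥ ((delMat B l l).adjugate *ᵥ delCol B l) =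
      ((delMat B l l).adjugate *ᵥ delCol B l) j₀ := by
    rw [dotProduct, Finset.sum_eq_single j₀]
    · simp [fSel, hj₀]
    · intro j _ hj
      have : l.succAbove j ≠ m := fun h => hj (Fin.succAbove_right_injective (h.trans hj₀.symm))
      simp [fSel, this]
    · simp
  rw [hdot, ← cramer_eq_adjugate_mulVec, cramer_apply]
  -- The full-size auxiliary matrices
  set G : Matrix (Fin (n+1)) (Fin (n+1)) ℝ := B.updateCol m (fun i => B i l) with hG
  set N : Matrix (Fin (n+1)) (Fin (n+1)) ℝ := G.updateRow l (Pi.single l 1) with hN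
  set M : Matrix (Fin (n+1)) (Fin (n+1)) ℝ := B.updateRow l (Pi.single m 1) with hM
  -- Step 2: the Cramer matrix is `N` with row `l` and column `l` deleted.
  have hsub : (delMat B l l).updateCol j₀ (delCol B l)
      = N.submatrix l.succAbove l.succAbove := by
    ext i j
    have hrow : l.succAbove i ≠ l := Fin.succAbove_ne l i
    rw [hN, submatrix_apply, updateRow_ne hrow, hG]
    by_cases hj : j = j₀
    · subst hj
      rw [updateCol_self]
      simp [updateCol_apply, hj₀, delCol]
    · have : l.succAbove j ≠ m := fun h => hj (Fin.succAbove_right_injective (h.trans hj₀.symm))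
      rw [updateCol_ne hj, delMat, submatrix_apply, updateCol_ne this]
  rw [hsub]
  -- Step 3: that determinant equals `det N` (Laplace along row `l` of `N`).
  have hNdet : N.det = (N.submatrix l.succAbove l.succAbove).det := by
    rw [det_succ_row N l, Fintype.sum_eq_single l]
    · have : N l l = 1 := by simp [hN]
      have h2 : (-1 : ℝ) ^ ((l : ℕ) + (l : ℕ)) = 1 := by
        rw [← two_mul, pow_mul]; norm_num
      rw [this, h2]; ring
    · intro j hj
      have : N l j = 0 := by
        rw [hN, updateRow_self, Pi.single_eq_of_ne hj]
      rw [this, mul_zero, zero_mul]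
  rw [← hNdet]
  -- Step 4: swap columns `l` and `m` of `N`; call the result `P`.
  have hswap : (N.submatrix id (Equiv.swap l m)).det = - N.det := by
    rw [det_permute', Equiv.Perm.sign_swap hlm]
    norm_num
  -- Step 5: identify the swapped matrix with an update of `M`.
  have hP : N.submatrix id (Equiv.swap l m)
      = M.updateCol m ((fun i => M i l) + Pi.single l 1) := by
    ext i j
    rw [submatrix_apply, id_eq]
    by_cases hj : j = m
    · rw [hj, Equiv.swap_apply_right, updateCol_self]
      by_cases hi : i = l
      · rw [hi]
        have h1 : N l l = (1 : ℝ) := by simp [hN]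
        have h2 : M l l = (0 : ℝ) := by
          rw [hM, updateRow_self, Pi.single_eq_of_ne hlm]
        simp [h1, h2]
      · have h1 : N i l = B i l := by
          rw [hN, updateRow_ne hi, hG, updateCol_ne hlm]
        have h2 : M i l = B i l := by rw [hM, updateRow_ne hi]
        simp [h1, h2, Pi.single_eq_of_ne hi]
    · rw [updateCol_ne hj]
      by_cases hjl : j = l
      · rw [hjl, Equiv.swap_apply_left]
        by_cases hi : i = l
        · rw [hi, hN, updateRow_self, hM, updateRow_self,
            Pi.single_eq_of_ne (Ne.symm hlm), Pi.single_eq_of_ne hlm]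
        · rw [hN, updateRow_ne hi, hG, updateCol_self, hM, updateRow_ne hi]
      · rw [Equiv.swap_apply_of_ne_of_ne hjl hj]
        by_cases hi : i = l
        · rw [hi]
          have h1 : N l j = (0 : ℝ) := by
            rw [hN, updateRow_self, Pi.single_eq_of_ne hjl]
          have h2 : M l j = (0 : ℝ) := by
            rw [hM, updateRow_self, Pi.single_eq_of_ne hj]
          rw [h1, h2]
        · rw [hN, updateRow_ne hi, hG, updateCol_ne hj, hM, updateRow_ne hi]
  -- Step 6: compute the determinant of the update of `M` by multilinearity.
  have hzero : (M.updateCol m (fun i => M i l)).det = 0 :=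
    det_updateCol_eq_zero hlm
  have hsingle : (M.updateCol m (Pi.single l 1)).det
      = (-1 : ℝ) ^ ((l : ℕ) + (m : ℕ)) * (delMat B l m).det := by
    rw [det_succ_column _ m, Fintype.sum_eq_single l]
    · rw [updateCol_self, Pi.single_eq_same, mul_one,
        submatrix_updateCol_succAbove, hM, submatrix_updateRow_succAbove]
      rfl
    · intro i hi
      rw [updateCol_self, Pi.single_eq_of_ne hi, mul_zero, zero_mul]
  have hMdet : (M.updateCol m ((fun i => M i l) + Pi.single l 1)).det
      = (-1 : ℝ) ^ ((l : ℕ) + (m : ℕ)) * (delMat B l m).det := by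
    rw [det_updateCol_add, hzero, hsingle, zero_add]
  -- Step 7: combine everything.
  have : - N.det = (-1 : ℝ) ^ ((l : ℕ) + (m : ℕ)) * (delMat B l m).det := by
    rw [← hswap, hP, hMdet]
  have hN' : N.det = -((-1 : ℝ) ^ ((l : ℕ) + (m : ℕ)) * (delMat B l m).det) := by
    linarith
  rw [hN', pow_succ, pow_add, pow_add]
  ring
end

section
/- Let B = (b_{ij}) be an n×n real matrix. Then for every index m: b_{m·} · adj(B(m|m)) · b_{·m} = Σ_{l≠m} b_{lm} f_{ml} · adj(B(l|l)) · b_{·l}, and both sides equal −det(B) + b_{mm} det(B(m|m)). -/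
open Matrix

/-- Determinant of a matrix whose first row is a standard basis vector `e_p`,
bordered on top of an `n × (n+1)` matrix `A`. -/
private lemma cons_single_det {n : ℕ} (A : Matrix (Fin n) (Fin (n + 1)) ℝ) (p : Fin (n + 1)) :
    det (Matrix.of (Fin.cons (Pi.single p 1) A) : Matrix (Fin (n + 1)) (Fin (n + 1)) ℝ)
      = (-1 : ℝ) ^ (p : ℕ) * det (A.submatrix id p.succAbove) := by
  rw [det_succ_row_zero]
  rw [Fintype.sum_eq_single p ?_]
  · have h1 : (Matrix.of (Fin.cons (Pi.single p 1) A) : Matrix (Fin (n + 1)) (Fin (n + 1)) ℝ)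
        0 p = 1 := by
      show (Pi.single p 1 : Fin (n + 1) → ℝ) p = 1
      simp
    have h2 : (Matrix.of (Fin.cons (Pi.single p 1) A) :
        Matrix (Fin (n + 1)) (Fin (n + 1)) ℝ).submatrix Fin.succ p.succAbove
        = A.submatrix id p.succAbove := by
      ext i k
      rfl
    rw [h1, h2, mul_one]
  · intro k hk
    have : (Matrix.of (Fin.cons (Pi.single p 1) A) : Matrix (Fin (n + 1)) (Fin (n + 1)) ℝ)
        0 k = 0 := by
      show (Pi.single p 1 : Fin (n + 1) → ℝ) k = 0
      simp [Pi.single_eq_of_ne hk]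
    rw [this, mul_zero, zero_mul]

/-- Core sign lemma: delete column `p` of `A`, then overwrite the slot `j`
(which corresponds to original column `q = p.succAbove j`) with column `p`.
The determinant equals `(-1)^(p+q+1)` times the determinant with column `q` deleted. -/
private lemma colSwap_det {n : ℕ} (A : Matrix (Fin n) (Fin (n + 1)) ℝ) (p : Fin (n + 1))
    (j : Fin n) :
    det ((A.submatrix id p.succAbove).updateCol j (fun i => A i p))
      = (-1 : ℝ) ^ ((p : ℕ) + (p.succAbove j : ℕ) + 1)
          * det (A.submatrix id (p.succAbove j).succAbove) := by
  set q := p.succAbove j with hq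
  have hqp : q ≠ p := Fin.succAbove_ne p j
  set At := A.updateCol q (fun i => A i p) with hAt
  have h1 : (A.submatrix id p.succAbove).updateCol j (fun i => A i p)
      = At.submatrix id p.succAbove := by
    ext i k
    by_cases hk : k = j
    · subst hk
      simp [hAt, Matrix.updateCol_apply, ← hq]
    · have hne : p.succAbove k ≠ q := by
        intro h
        exact hk (Fin.succAbove_right_injective (p := p) (h.trans hq))
      simp [hAt, Matrix.updateCol_apply, hk, hne]
  set Z : Matrix (Fin (n + 1)) (Fin (n + 1)) ℝ := Matrix.of (Fin.cons (Pi.single p 1) At)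
    with hZ
  have c0 : ∀ k, Z 0 k = (Pi.single p 1 : Fin (n + 1) → ℝ) k := fun _ => rfl
  have cs : ∀ i k, Z i.succ k = At i k := fun _ _ => rfl
  have h2 : det Z = (-1 : ℝ) ^ (p : ℕ) * det (At.submatrix id p.succAbove) :=
    cons_single_det At p
  set e0 : Fin (n + 1) → ℝ := Pi.single 0 1 with he0
  have h3 : Z = Z.updateCol q ((fun i => Z i p) + (-1 : ℝ) • e0) := by
    ext i k
    rw [Matrix.updateCol_apply]
    split_ifs with h
    · subst h
      refine Fin.cases ?_ (fun i' => ?_) i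
      · simp [c0, he0, Pi.single_eq_of_ne hqp]
      · have h0 : (i'.succ : Fin (n + 1)) ≠ 0 := Fin.succ_ne_zero i'
        simp [cs, he0, hAt, Pi.single_eq_of_ne h0, Matrix.updateCol_apply,
          Ne.symm hqp]
    · rfl
  have h4 : det Z = - det (Z.updateCol q e0) := by
    conv_lhs => rw [h3]
    rw [det_updateCol_add, det_updateCol_smul]
    have hzero : det (Z.updateCol q (fun i => Z i p)) = 0 :=
      det_zero_of_column_eq hqp (by simp [Matrix.updateCol_apply, Ne.symm hqp])
    rw [hzero, zero_add]
    ring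
  have h5 : det (Z.updateCol q e0)
      = (-1 : ℝ) ^ (q : ℕ) * det (A.submatrix id q.succAbove) := by
    rw [det_succ_column _ q]
    rw [Fintype.sum_eq_single 0 ?_]
    · have e1 : (Z.updateCol q e0) 0 q = 1 := by
        simp [he0]
      have e2 : (Z.updateCol q e0).submatrix
          (Fin.succAbove 0) q.succAbove = A.submatrix id q.succAbove := by
        ext i k
        have hne : q.succAbove k ≠ q := Fin.succAbove_ne q k
        simp [Matrix.updateCol_apply, hne, cs, hAt, Fin.succAbove_zero]
      rw [e1, e2, Fin.val_zero, Nat.zero_add, mul_one]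
    · intro i hi
      have : (Z.updateCol q e0) i q = 0 := by
        simp [he0, Pi.single_eq_of_ne hi]
      rw [this, mul_zero, zero_mul]
  have hp2 : ((-1 : ℝ) ^ (p : ℕ)) * ((-1 : ℝ) ^ (p : ℕ)) = 1 := by
    rw [← pow_add]
    exact Even.neg_one_pow ⟨_, rfl⟩
  rw [h1]
  rw [pow_add, pow_add, pow_one]
  have H : (-1 : ℝ) ^ (p : ℕ) * det (At.submatrix id p.succAbove)
      = -((-1 : ℝ) ^ (q : ℕ) * det (A.submatrix id q.succAbove)) := by
    rw [← h2, h4, h5]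
  calc det (At.submatrix id p.succAbove)
      = ((-1 : ℝ) ^ (p : ℕ) * (-1 : ℝ) ^ (p : ℕ)) * det (At.submatrix id p.succAbove) := by
        rw [hp2, one_mul]
    _ = (-1 : ℝ) ^ (p : ℕ) * ((-1 : ℝ) ^ (p : ℕ) * det (At.submatrix id p.succAbove)) := by
        ring
    _ = (-1 : ℝ) ^ (p : ℕ) * (-((-1 : ℝ) ^ (q : ℕ) * det (A.submatrix id q.succAbove))) := by
        rw [H]
    _ = (-1 : ℝ) ^ (p : ℕ) * (-1 : ℝ) ^ (q : ℕ) * -1 * det (A.submatrix id q.succAbove) := by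
        ring

private lemma cramer_term {n : ℕ} (B : Matrix (Fin (n + 1)) (Fin (n + 1)) ℝ)
    (l : Fin (n + 1)) (j : Fin n) :
    ((delMat B l l).adjugate *ᵥ delCol B l) j
      = (-1 : ℝ) ^ ((l : ℕ) + (l.succAbove j : ℕ) + 1) * det (delMat B l (l.succAbove j)) := by
  have h := colSwap_det (B.submatrix l.succAbove id) l j
  rw [← cramer_eq_adjugate_mulVec, cramer_apply]
  exact h

/-- For an `(n+1) × (n+1)` real matrix `B` and every index `m`:
`b_{m·} · adj(B(m|m)) · b_{·m} = ∑_{l≠m} b_{lm} f_{ml} · adj(B(l|l)) · b_{·l}`,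
and both sides equal `−det B + b_{mm} det B(m|m)`. -/
theorem row_adjugate_col_eq_sum_and_det
    {n : ℕ} (B : Matrix (Fin (n + 1)) (Fin (n + 1)) ℝ) (m : Fin (n + 1)) :
    delRow B m ⬝ᵥ ((delMat B m m).adjugate *ᵥ delCol B m) =
        ∑ l ∈ Finset.univ.erase m,
          B l m * (fSel m l ⬝ᵥ ((delMat B l l).adjugate *ᵥ delCol B l)) ∧
      delRow B m ⬝ᵥ ((delMat B m m).adjugate *ᵥ delCol B m) =
        -B.det + B m m * (delMat B m m).det := by
  have hmm : ((-1 : ℝ) ^ ((m : ℕ) + (m : ℕ))) = 1 := Even.neg_one_pow ⟨_, rfl⟩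
  have key2 : delRow B m ⬝ᵥ ((delMat B m m).adjugate *ᵥ delCol B m) =
      -B.det + B m m * (delMat B m m).det := by
    have hdet : B.det
        = ∑ k : Fin (n + 1), (-1 : ℝ) ^ ((m : ℕ) + (k : ℕ)) * B m k * det (delMat B m k) :=
      det_succ_row B m
    rw [Fin.sum_univ_succAbove
      (fun k => (-1 : ℝ) ^ ((m : ℕ) + (k : ℕ)) * B m k * det (delMat B m k)) m] at hdet
    have hlhs : delRow B m ⬝ᵥ ((delMat B m m).adjugate *ᵥ delCol B m)
        = ∑ j, delRow B m j * ((delMat B m m).adjugate *ᵥ delCol B m) j := rfl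
    rw [hlhs]
    have hterm : ∀ j : Fin n,
        delRow B m j * ((delMat B m m).adjugate *ᵥ delCol B m) j
          = -((-1 : ℝ) ^ ((m : ℕ) + (m.succAbove j : ℕ)) * B m (m.succAbove j)
              * det (delMat B m (m.succAbove j))) := by
      intro j
      rw [cramer_term B m j, pow_succ]
      show B m (m.succAbove j) * _ = _
      ring
    rw [Finset.sum_congr rfl (fun j _ => hterm j), Finset.sum_neg_distrib]
    have : ∑ j : Fin n, (-1 : ℝ) ^ ((m : ℕ) + (m.succAbove j : ℕ)) * B m (m.succAbove j)
        * det (delMat B m (m.succAbove j))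
        = B.det - B m m * det (delMat B m m) := by
      rw [hdet, hmm]
      ring
    rw [this]
    ring
  refine ⟨?_, key2⟩
  rw [key2]
  have hterm : ∀ l ∈ Finset.univ.erase m,
      B l m * (fSel m l ⬝ᵥ ((delMat B l l).adjugate *ᵥ delCol B l))
        = -((-1 : ℝ) ^ ((l : ℕ) + (m : ℕ)) * B l m * det (delMat B l m)) := by
    intro l hl
    have hlm : l ≠ m := Finset.ne_of_mem_erase hl
    obtain ⟨j0, hj0⟩ := Fin.exists_succAbove_eq (show m ≠ l from hlm.symm)
    have hdot : fSel m l ⬝ᵥ ((delMat B l l).adjugate *ᵥ delCol B l)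
        = ((delMat B l l).adjugate *ᵥ delCol B l) j0 := by
      show (∑ j, fSel m l j * ((delMat B l l).adjugate *ᵥ delCol B l) j) = _
      rw [Finset.sum_eq_single j0]
      · rw [show fSel m l j0 = 1 from if_pos hj0, one_mul]
      · intro k _ hk
        have : l.succAbove k ≠ m := by
          intro h
          exact hk (Fin.succAbove_right_injective (p := l) (h.trans hj0.symm))
        rw [show fSel m l k = 0 from if_neg this, zero_mul]
      · intro h
        exact absurd (Finset.mem_univ j0) h
    rw [hdot, cramer_term B l j0, hj0, pow_succ]
    ring
  rw [Finset.sum_congr rfl hterm, Finset.sum_neg_distrib]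
  have hdet : B.det
      = ∑ l : Fin (n + 1), (-1 : ℝ) ^ ((l : ℕ) + (m : ℕ)) * B l m * det (delMat B l m) :=
    det_succ_column B m
  have hsplit := Finset.sum_erase_add Finset.univ
    (fun l : Fin (n + 1) => (-1 : ℝ) ^ ((l : ℕ) + (m : ℕ)) * B l m * det (delMat B l m))
    (Finset.mem_univ m)
  rw [← hdet] at hsplit
  have hsplit' : (∑ l ∈ Finset.univ.erase m,
        (-1 : ℝ) ^ ((l : ℕ) + (m : ℕ)) * B l m * det (delMat B l m))
      + (-1 : ℝ) ^ ((m : ℕ) + (m : ℕ)) * B m m * det (delMat B m m) = B.det := hsplit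
  rw [hmm, one_mul] at hsplit'
  have : ∑ l ∈ Finset.univ.erase m,
      (-1 : ℝ) ^ ((l : ℕ) + (m : ℕ)) * B l m * det (delMat B l m)
      = B.det - B m m * det (delMat B m m) := by linarith
  rw [this]
  ring
end

section
/- Let B = (b_{ij}) be an n×n real matrix and let l ≠ m be indices. Then −b_{mm} f_{lm} · adj(B(m|m)) · b_{·m} = −b_{lm} det(B(l|l)) + Σ_{k≠l, k≠m} b_{km} f_{lk} · adj(B(k|k)) · b_{·k}. -/
open Matrix

lemma key_lemma {n : ℕ} (B : Matrix (Fin (n + 1)) (Fin (n + 1)) ℝ)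
    {l k : Fin (n + 1)} (hlk : l ≠ k) :
    fSel l k ⬝ᵥ ((delMat B k k).adjugate *ᵥ delCol B k) = -B.adjugate l k := by
  obtain ⟨j, hj⟩ := Fin.exists_succAbove_eq hlk
  have hf : fSel l k = Pi.single j 1 := by
    funext j'
    simp only [fSel, Pi.single_apply]
    by_cases h : j' = j
    · subst h; simp [hj]
    · rw [if_neg (fun hc => h (Fin.succAbove_right_injective (hc.trans hj.symm))), if_neg h]
  rw [hf, single_dotProduct, one_mul, ← Matrix.cramer_eq_adjugate_mulVec,
    Matrix.cramer_apply]
  have hC : (delMat B k k).updateCol j (delCol B k) =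
      (B.updateCol l (fun i => B i k)).submatrix k.succAbove k.succAbove := by
    ext i j'
    by_cases h : j' = j
    · subst h
      simp [delCol, delMat, Matrix.updateCol_apply, hj]
    · have h2 : k.succAbove j' ≠ l :=
        fun hc => h (Fin.succAbove_right_injective (hc.trans hj.symm))
      simp [delMat, Matrix.updateCol_apply, h, h2]
  rw [hC]
  have h1 : ((B.updateCol l (fun i => B i k)).submatrix k.succAbove k.succAbove).det
      = (B.updateCol l (fun i => B i k)).adjugate k k := by
    rw [Matrix.adjugate_fin_succ_eq_det_submatrix,
      (Even.neg_one_pow ⟨(k : ℕ), rfl⟩ : (-1 : ℝ) ^ ((k : ℕ) + (k : ℕ)) = 1), one_mul]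
  rw [h1, Matrix.adjugate_apply]
  set F := B.updateRow k (Pi.single k 1) with hF
  have hD : (B.updateCol l (fun i => B i k)).updateRow k (Pi.single k 1) =
      F.updateCol l ((fun i => F i k) - Pi.single k 1) := by
    ext i j2
    by_cases hik : i = k
    · subst hik
      by_cases hjl : j2 = l
      · subst hjl
        simp [hF, Matrix.updateRow_apply, Matrix.updateCol_apply,
          Pi.single_apply, (Ne.symm hlk)]
      · simp [hF, Matrix.updateRow_apply, Matrix.updateCol_apply, hjl]
    · by_cases hjl : j2 = l
      · subst hjl
        simp [hF, Matrix.updateRow_apply, Matrix.updateCol_apply,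
          Pi.single_apply, hik]
      · simp [hF, Matrix.updateRow_apply, Matrix.updateCol_apply, hjl, hik]
  rw [hD, ← Matrix.cramer_apply, map_sub]
  have hz : Matrix.cramer F (fun i => F i k) l = 0 := by
    rw [Matrix.cramer_apply]
    exact Matrix.det_updateCol_eq_zero hlk.symm
  have hs : Matrix.cramer F (Pi.single k 1) l = B.adjugate l k := by
    rw [Matrix.cramer_eq_adjugate_mulVec]
    have : F.adjugate *ᵥ Pi.single k 1 = fun i => F.adjugate i k := by
      funext i
      simp [Matrix.mulVec, dotProduct, Pi.single_apply, mul_ite]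
    rw [this]
    have : F.adjugate l k = B.adjugate l k := by
      rw [Matrix.adjugate_apply, Matrix.adjugate_apply, hF]
      congr 1
      ext i j2
      simp only [Matrix.updateRow_apply]
      split <;> rfl
    exact this
  rw [Pi.sub_apply, hz, hs, zero_sub]

/-- For an `(n+1) × (n+1)` real matrix `B` and indices `l ≠ m`:
`−b_{mm} f_{lm} · adj(B(m|m)) · b_{·m}
  = −b_{lm} det B(l|l) + ∑_{k≠l,k≠m} b_{km} f_{lk} · adj(B(k|k)) · b_{·k}`. -/
theorem neg_diag_fSel_adjugate_identity
    {n : ℕ} (B : Matrix (Fin (n + 1)) (Fin (n + 1)) ℝ)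
    (l m : Fin (n + 1)) (hlm : l ≠ m) :
    -(B m m * (fSel l m ⬝ᵥ ((delMat B m m).adjugate *ᵥ delCol B m))) =
      -(B l m * (delMat B l l).det) +
        ∑ k ∈ (Finset.univ.erase l).erase m,
          B k m * (fSel l k ⬝ᵥ ((delMat B k k).adjugate *ᵥ delCol B k)) := by
  have hdiag : B.adjugate l l = (delMat B l l).det := by
    rw [Matrix.adjugate_fin_succ_eq_det_submatrix,
      (Even.neg_one_pow ⟨(l : ℕ), rfl⟩ : (-1 : ℝ) ^ ((l : ℕ) + (l : ℕ)) = 1), one_mul]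
    rfl
  have hsum : ∑ k, B.adjugate l k * B k m = 0 := by
    have h := congrFun (congrFun (Matrix.adjugate_mul B) l) m
    simpa [Matrix.mul_apply, Matrix.one_apply, hlm] using h
  have hterm : ∀ k ∈ (Finset.univ.erase l).erase m,
      B k m * (fSel l k ⬝ᵥ ((delMat B k k).adjugate *ᵥ delCol B k)) =
        -(B.adjugate l k * B k m) := by
    intro k hk
    have hk1 := Finset.mem_erase.mp hk
    have hk2 := Finset.mem_erase.mp hk1.2
    rw [key_lemma B (Ne.symm hk2.1)]
    ring
  rw [Finset.sum_congr rfl hterm, key_lemma B hlm, ← hdiag, Finset.sum_neg_distrib]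
  have h1 : B.adjugate l l * B l m + ∑ k ∈ Finset.univ.erase l, B.adjugate l k * B k m
      = ∑ k, B.adjugate l k * B k m :=
    Finset.add_sum_erase _ (fun k => B.adjugate l k * B k m) (Finset.mem_univ l)
  have h2 : B.adjugate l m * B m m +
      ∑ k ∈ (Finset.univ.erase l).erase m, B.adjugate l k * B k m
      = ∑ k ∈ Finset.univ.erase l, B.adjugate l k * B k m :=
    Finset.add_sum_erase _ (fun k => B.adjugate l k * B k m) (Finset.mem_erase.mpr ⟨Ne.symm hlm, Finset.mem_univ m⟩)
  linear_combination h1 + h2 + hsum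
end
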